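/- arXiv:2002.07278 — 2 statements merged into one kernel-verified Lean document; each statement's English description precedes it below -/
import Mathlib

section
/- Let A be an alternating Büchi automaton and let B be the nondeterministic Büchi automaton obtained from A by the breakpoint (Miyano–Hayashi) construction for removing alternation. Then A is ∃GFG if and only if B is GFG. -/
set_option autoImplicit false
set_option linter.unusedVariables false

/-! ### Positive Boolean formulas -/

inductive PosBool (Q : Type) : Type
  | atom : Q → PosBool Q
  | and : PosBool Q → PosBool Q → PosBool Q
  | or : PosBool Q → PosBool Q → PosBool Q

namespace PosBool

variable {Q : Type}

/-- The possible outcomes of Eve resolving all the disjunctions of a positive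
Boolean formula: each element of `eveRes φ` is the set of atoms that Adam can
reach (by resolving the conjunctions) against that fixed resolution of Eve.
These are exactly the `q`-boxes of the one-step game over the formula `φ`. -/
def eveRes : PosBool Q → Set (Set Q)
  | atom q => {{q}}
  | and f g => {s | ∃ u ∈ eveRes f, ∃ v ∈ eveRes g, s = u ∪ v}
  | or f g => eveRes f ∪ eveRes g

/-- The dual formula: swap disjunctions and conjunctions. -/
def dual : PosBool Q → PosBool Q
  | atom q => atom q
  | and f g => or (dual f) (dual g)
  | or f g => and (dual f) (dual g)

/-- Length (number of nodes) of a formula. -/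
def size : PosBool Q → ℕ
  | atom _ => 1
  | and f g => size f + size g + 1
  | or f g => size f + size g + 1

/-- Atoms occurring in a formula. -/
def atoms : PosBool Q → Set Q
  | atom q => {q}
  | and f g => atoms f ∪ atoms g
  | or f g => atoms f ∪ atoms g

/-- A purely conjunctive formula (no disjunctions). -/
def NoOr : PosBool Q → Prop
  | atom _ => True
  | and f g => NoOr f ∧ NoOr g
  | or _ _ => False

/-- A purely disjunctive formula (no conjunctions). -/
def NoAnd : PosBool Q → Prop
  | atom _ => True
  | and _ _ => False
  | or f g => NoAnd f ∧ NoAnd g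

/-- Disjunctive normal form: a disjunction of conjunctions. -/
def IsDNF : PosBool Q → Prop
  | or f g => IsDNF f ∧ IsDNF g
  | φ => NoOr φ

end PosBool

/-! ### Acceptance conditions -/

/-- `c` appears infinitely often in `f`. -/
def InfOften (f : ℕ → ℕ) (c : ℕ) : Prop := ∀ n, ∃ m, n ≤ m ∧ f m = c

/-- The parity condition: the highest value appearing infinitely often is even. -/
def ParityAccept (f : ℕ → ℕ) : Prop :=
  ∃ c, Even c ∧ InfOften f c ∧ ∀ d, InfOften f d → d ≤ c

/-- The sequence `ρ` visits the set `S` infinitely often. -/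
def InfOftenIn {T : Type} (ρ : ℕ → T) (S : Set T) : Prop := ∀ n, ∃ m, n ≤ m ∧ ρ m ∈ S

/-- A Rabin (or Streett) pair of sets of transitions. -/
structure RabinPair (T : Type) where
  bad : Set T
  good : Set T

/-- The Rabin condition for pairs `⟨B_i, G_i⟩`, `i < k`: for some `i`,
`inf(ρ) ∩ B_i = ∅` and `inf(ρ) ∩ G_i ≠ ∅`. -/
def RabinAccept {T : Type} {k : ℕ} (pairs : Fin k → RabinPair T) (ρ : ℕ → T) : Prop :=
  ∃ i, ¬ InfOftenIn ρ (pairs i).bad ∧ InfOftenIn ρ (pairs i).good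

/-- The Streett condition for pairs `⟨B_i, G_i⟩`, `i < k`: for every `i`,
`inf(ρ) ∩ B_i = ∅` or `inf(ρ) ∩ G_i ≠ ∅`. -/
def StreettAccept {T : Type} {k : ℕ} (pairs : Fin k → RabinPair T) (ρ : ℕ → T) : Prop :=
  ∀ i, ¬ InfOftenIn ρ (pairs i).bad ∨ InfOftenIn ρ (pairs i).good

/-! ### Generic two-player games of infinite duration.

A game proceeds in rounds; in each round, from the current game state, up to
six moves are played in alternation: Adam moves first (`a1`), then Eve (`e1`),
then Adam (`a2`), then Eve (`e2`), then Adam (`a3`), then Eve (`e3`).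
(Unused phases are modelled by the type `Unit`.)  Strategies may use the full
history of the play (the list of previous complete rounds) as well as the moves
already played in the current round.  Eve wins an infinite play iff the
sequence of rounds satisfies the winning condition `win`. -/

structure GameRound (St α1 β1 α2 β2 α3 β3 : Type) where
  st : St
  a1 : α1
  e1 : β1
  a2 : α2
  e2 : β2
  a3 : α3
  e3 : β3

structure Game (St α1 β1 α2 β2 α3 β3 : Type) where
  init : St
  A1 : St → Set α1
  E1 : St → α1 → Set β1
  A2 : St → α1 → β1 → Set α2
  E2 : St → α1 → β1 → α2 → Set β2
  A3 : St → α1 → β1 → α2 → β2 → Set α3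
  E3 : St → α1 → β1 → α2 → β2 → α3 → Set β3
  next : St → α1 → β1 → α2 → β2 → α3 → β3 → St
  win : (ℕ → GameRound St α1 β1 α2 β2 α3 β3) → Prop

namespace Game

variable {St α1 β1 α2 β2 α3 β3 : Type}

/-- The states along the play are correctly updated. -/
def StateOk (G : Game St α1 β1 α2 β2 α3 β3) (ρ : ℕ → GameRound St α1 β1 α2 β2 α3 β3) : Prop :=
  (ρ 0).st = G.init ∧
  ∀ n, (ρ (n+1)).st = G.next (ρ n).st (ρ n).a1 (ρ n).e1 (ρ n).a2 (ρ n).e2 (ρ n).a3 (ρ n).e3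

/-- Round `n` of the play is entirely legal. -/
def RoundLegal (G : Game St α1 β1 α2 β2 α3 β3) (ρ : ℕ → GameRound St α1 β1 α2 β2 α3 β3)
    (n : ℕ) : Prop :=
  (ρ n).a1 ∈ G.A1 (ρ n).st ∧
  (ρ n).e1 ∈ G.E1 (ρ n).st (ρ n).a1 ∧
  (ρ n).a2 ∈ G.A2 (ρ n).st (ρ n).a1 (ρ n).e1 ∧
  (ρ n).e2 ∈ G.E2 (ρ n).st (ρ n).a1 (ρ n).e1 (ρ n).a2 ∧
  (ρ n).a3 ∈ G.A3 (ρ n).st (ρ n).a1 (ρ n).e1 (ρ n).a2 (ρ n).e2 ∧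
  (ρ n).e3 ∈ G.E3 (ρ n).st (ρ n).a1 (ρ n).e1 (ρ n).a2 (ρ n).e2 (ρ n).a3

/-- All rounds before round `n` are entirely legal. -/
def Hleg (G : Game St α1 β1 α2 β2 α3 β3) (ρ : ℕ → GameRound St α1 β1 α2 β2 α3 β3)
    (n : ℕ) : Prop :=
  ∀ m, m < n → RoundLegal G ρ m

/-- Eve wins the play `ρ`: she is never the first player to make an illegal
move (the moves of each round are ordered `a1, e1, a2, e2, a3, e3`), and if all
moves are legal then the play satisfies the winning condition. -/
def EveWinsPlay (G : Game St α1 β1 α2 β2 α3 β3)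
    (ρ : ℕ → GameRound St α1 β1 α2 β2 α3 β3) : Prop :=
  (∀ n, Hleg G ρ n → (ρ n).a1 ∈ G.A1 (ρ n).st →
      (ρ n).e1 ∈ G.E1 (ρ n).st (ρ n).a1) ∧
  (∀ n, Hleg G ρ n → (ρ n).a1 ∈ G.A1 (ρ n).st →
      (ρ n).e1 ∈ G.E1 (ρ n).st (ρ n).a1 →
      (ρ n).a2 ∈ G.A2 (ρ n).st (ρ n).a1 (ρ n).e1 →
      (ρ n).e2 ∈ G.E2 (ρ n).st (ρ n).a1 (ρ n).e1 (ρ n).a2) ∧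
  (∀ n, Hleg G ρ n → (ρ n).a1 ∈ G.A1 (ρ n).st →
      (ρ n).e1 ∈ G.E1 (ρ n).st (ρ n).a1 →
      (ρ n).a2 ∈ G.A2 (ρ n).st (ρ n).a1 (ρ n).e1 →
      (ρ n).e2 ∈ G.E2 (ρ n).st (ρ n).a1 (ρ n).e1 (ρ n).a2 →
      (ρ n).a3 ∈ G.A3 (ρ n).st (ρ n).a1 (ρ n).e1 (ρ n).a2 (ρ n).e2 →
      (ρ n).e3 ∈ G.E3 (ρ n).st (ρ n).a1 (ρ n).e1 (ρ n).a2 (ρ n).e2 (ρ n).a3) ∧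
  ((∀ n, RoundLegal G ρ n) → G.win ρ)

/-- Adam wins the play `ρ`: he is never the first player to make an illegal
move, and if all moves are legal then the play violates the (Eve) winning
condition. -/
def AdamWinsPlay (G : Game St α1 β1 α2 β2 α3 β3)
    (ρ : ℕ → GameRound St α1 β1 α2 β2 α3 β3) : Prop :=
  (∀ n, Hleg G ρ n → (ρ n).a1 ∈ G.A1 (ρ n).st) ∧
  (∀ n, Hleg G ρ n → (ρ n).a1 ∈ G.A1 (ρ n).st →
      (ρ n).e1 ∈ G.E1 (ρ n).st (ρ n).a1 →
      (ρ n).a2 ∈ G.A2 (ρ n).st (ρ n).a1 (ρ n).e1) ∧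
  (∀ n, Hleg G ρ n → (ρ n).a1 ∈ G.A1 (ρ n).st →
      (ρ n).e1 ∈ G.E1 (ρ n).st (ρ n).a1 →
      (ρ n).a2 ∈ G.A2 (ρ n).st (ρ n).a1 (ρ n).e1 →
      (ρ n).e2 ∈ G.E2 (ρ n).st (ρ n).a1 (ρ n).e1 (ρ n).a2 →
      (ρ n).a3 ∈ G.A3 (ρ n).st (ρ n).a1 (ρ n).e1 (ρ n).a2 (ρ n).e2) ∧
  ((∀ n, RoundLegal G ρ n) → ¬ G.win ρ)

/-- The history of a play before round `n`: the list of the first `n` rounds. -/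
def hist (ρ : ℕ → GameRound St α1 β1 α2 β2 α3 β3) (n : ℕ) : List (GameRound St α1 β1 α2 β2 α3 β3) :=
  (List.range n).map ρ

/-- A strategy of Eve: for each of her three moves in a round, a choice
depending on the history, the current state, and the moves already played
in the current round. -/
structure EStrat (St α1 β1 α2 β2 α3 β3 : Type) where
  f1 : List (GameRound St α1 β1 α2 β2 α3 β3) → St → α1 → β1
  f2 : List (GameRound St α1 β1 α2 β2 α3 β3) → St → α1 → β1 → α2 → β2
  f3 : List (GameRound St α1 β1 α2 β2 α3 β3) → St → α1 → β1 → α2 → β2 → α3 → β3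

/-- A strategy of Adam. -/
structure AStrat (St α1 β1 α2 β2 α3 β3 : Type) where
  g1 : List (GameRound St α1 β1 α2 β2 α3 β3) → St → α1
  g2 : List (GameRound St α1 β1 α2 β2 α3 β3) → St → α1 → β1 → α2
  g3 : List (GameRound St α1 β1 α2 β2 α3 β3) → St → α1 → β1 → α2 → β2 → α3

/-- The play `ρ` is consistent with the strategy `σ` of Eve. -/
def ConsE (σ : EStrat St α1 β1 α2 β2 α3 β3) (ρ : ℕ → GameRound St α1 β1 α2 β2 α3 β3) : Prop :=
  ∀ n, (ρ n).e1 = σ.f1 (hist ρ n) (ρ n).st (ρ n).a1 ∧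
       (ρ n).e2 = σ.f2 (hist ρ n) (ρ n).st (ρ n).a1 (ρ n).e1 (ρ n).a2 ∧
       (ρ n).e3 = σ.f3 (hist ρ n) (ρ n).st (ρ n).a1 (ρ n).e1 (ρ n).a2 (ρ n).e2 (ρ n).a3

/-- The play `ρ` is consistent with the strategy `τ` of Adam. -/
def ConsA (τ : AStrat St α1 β1 α2 β2 α3 β3) (ρ : ℕ → GameRound St α1 β1 α2 β2 α3 β3) : Prop :=
  ∀ n, (ρ n).a1 = τ.g1 (hist ρ n) (ρ n).st ∧
       (ρ n).a2 = τ.g2 (hist ρ n) (ρ n).st (ρ n).a1 (ρ n).e1 ∧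
       (ρ n).a3 = τ.g3 (hist ρ n) (ρ n).st (ρ n).a1 (ρ n).e1 (ρ n).a2 (ρ n).e2

/-- `σ` is a winning strategy for Eve: every play consistent with `σ` is won
by Eve. -/
def EveWinningStrat (G : Game St α1 β1 α2 β2 α3 β3) (σ : EStrat St α1 β1 α2 β2 α3 β3) : Prop :=
  ∀ ρ, StateOk G ρ → ConsE σ ρ → EveWinsPlay G ρ

/-- Eve wins the game `G`. -/
def EveWins (G : Game St α1 β1 α2 β2 α3 β3) : Prop := ∃ σ, EveWinningStrat G σ

/-- `τ` is a winning strategy for Adam: every play consistent with `τ` is won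
by Adam. -/
def AdamWinningStrat (G : Game St α1 β1 α2 β2 α3 β3) (τ : AStrat St α1 β1 α2 β2 α3 β3) : Prop :=
  ∀ ρ, StateOk G ρ → ConsA τ ρ → AdamWinsPlay G ρ

/-- Adam wins the game `G`. -/
def AdamWins (G : Game St α1 β1 α2 β2 α3 β3) : Prop := ∃ τ, AdamWinningStrat G τ

end Game
/-! ### Alternating automata on infinite words -/

/-- An alternating automaton over the alphabet `A`: a set of states, an initial
state, a transition function assigning to each state and letter a positive
Boolean formula over the states, and an acceptance condition `acc` on infinite
sequences of transitions `(q_n, a_n, q_{n+1})`. -/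
structure AltAut (A : Type) where
  Q : Type
  init : Q
  delta : Q → A → PosBool Q
  acc : (ℕ → Q × A × Q) → Prop

namespace AltAut

variable {A : Type}

/-- `M` is a parity automaton with priority labelling `p`. -/
def IsParity (M : AltAut A) (p : M.Q → A → M.Q → ℕ) : Prop :=
  ∀ ρ, M.acc ρ ↔ ParityAccept fun n => p (ρ n).1 (ρ n).2.1 (ρ n).2.2

/-- `M` is a Rabin automaton with the Rabin pairs `pairs`. -/
def IsRabin (M : AltAut A) {k : ℕ} (pairs : Fin k → RabinPair (M.Q × A × M.Q)) : Prop :=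
  ∀ ρ, M.acc ρ ↔ RabinAccept pairs ρ

/-- `M` is a Streett automaton with the Streett pairs `pairs`. -/
def IsStreett (M : AltAut A) {k : ℕ} (pairs : Fin k → RabinPair (M.Q × A × M.Q)) : Prop :=
  ∀ ρ, M.acc ρ ↔ StreettAccept pairs ρ

/-- `M` is a Büchi automaton with accepting transitions `F`. -/
def IsBuchi (M : AltAut A) (F : Set (M.Q × A × M.Q)) : Prop :=
  ∀ ρ, M.acc ρ ↔ InfOftenIn ρ F

/-- `M` is a weak automaton (with parity labelling `p`): every path following
transitions of the automaton eventually remains in a single priority. -/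
def IsWeak (M : AltAut A) (p : M.Q → A → M.Q → ℕ) : Prop :=
  M.IsParity p ∧
  ∀ ρ : ℕ → M.Q × A × M.Q,
    (∀ n, (ρ n).2.2 = (ρ (n+1)).1 ∧ (ρ n).2.2 ∈ PosBool.atoms (M.delta (ρ n).1 (ρ n).2.1)) →
    ∃ N c, ∀ n, N ≤ n → p (ρ n).1 (ρ n).2.1 (ρ n).2.2 = c

/-- `M` is nondeterministic: all transition conditions are disjunctive. -/
def IsNondet (M : AltAut A) : Prop := ∀ q a, (M.delta q a).NoAnd

/-- `M` is universal: all transition conditions are conjunctive. -/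
def IsUniversal (M : AltAut A) : Prop := ∀ q a, (M.delta q a).NoOr

/-- The dual automaton: swap disjunctions and conjunctions, and dualise the
acceptance condition. -/
def dual (M : AltAut A) : AltAut A where
  Q := M.Q
  init := M.init
  delta q a := (M.delta q a).dual
  acc ρ := ¬ M.acc ρ

/-- The model-checking (acceptance) game of `M` over the word `w`.  A round
from state `q` at step `n`: Eve resolves the disjunctions of `δ(q, w_n)`
(choosing an element of `eveRes`), and Adam resolves the conjunctions
(choosing a state in that set).  Eve wins iff the resulting path of
transitions is accepting. -/
def mcGame (M : AltAut A) (w : ℕ → A) :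
    Game (ℕ × M.Q) Unit (Set M.Q) M.Q Unit Unit Unit where
  init := (0, M.init)
  A1 _ := Set.univ
  E1 p _ := PosBool.eveRes (M.delta p.2 (w p.1))
  A2 _ _ S := S
  E2 _ _ _ _ := Set.univ
  A3 _ _ _ _ _ := Set.univ
  E3 _ _ _ _ _ _ := Set.univ
  next p _ _ q' _ _ _ := (p.1 + 1, q')
  win ρ := M.acc fun n => ((ρ n).st.2, w n, (ρ n).a2)

/-- The language of `M`: the words for which Eve wins the model-checking game. -/
def Lang (M : AltAut A) : Set (ℕ → A) := {w | Game.EveWins (M.mcGame w)}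

/-- Eve's letter game on `M`: Adam picks a letter, then the one-step formula is
resolved (Eve the disjunctions, Adam the conjunctions).  Eve wins iff the word
played is not in `L(M)` or the path produced is accepting. -/
def eLetterGame (M : AltAut A) : Game M.Q A (Set M.Q) M.Q Unit Unit Unit where
  init := M.init
  A1 _ := Set.univ
  E1 q a := PosBool.eveRes (M.delta q a)
  A2 _ _ S := S
  E2 _ _ _ _ := Set.univ
  A3 _ _ _ _ _ := Set.univ
  E3 _ _ _ _ _ _ := Set.univ
  next _ _ _ q' _ _ _ := q'
  win ρ := (fun n => (ρ n).a1) ∉ M.Lang ∨ M.acc fun n => ((ρ n).st, (ρ n).a1, (ρ n).a2)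

/-- Adam's letter game on `M`: Eve picks a letter and resolves the disjunctions
of the one-step formula, Adam resolves the conjunctions.  Adam wins iff the
word played is in `L(M)` or the path produced is rejecting; accordingly the
condition `win` (for Eve) is that the word is not in `L(M)` and the path is
accepting. -/
def aLetterGame (M : AltAut A) : Game M.Q Unit (A × Set M.Q) M.Q Unit Unit Unit where
  init := M.init
  A1 _ := Set.univ
  E1 q _ := {m : A × Set M.Q | m.2 ∈ PosBool.eveRes (M.delta q m.1)}
  A2 _ _ m := m.2
  E2 _ _ _ _ := Set.univ
  A3 _ _ _ _ _ := Set.univ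
  E3 _ _ _ _ _ _ := Set.univ
  next _ _ _ q' _ _ _ := q'
  win ρ := (fun n => (ρ n).e1.1) ∉ M.Lang ∧ M.acc fun n => ((ρ n).st, (ρ n).e1.1, (ρ n).a2)

/-- `M` is ∃GFG: Eve wins her letter game. -/
def ExistsGFG (M : AltAut A) : Prop := Game.EveWins M.eLetterGame

/-- `M` is ∀GFG: Adam wins his letter game. -/
def ForallGFG (M : AltAut A) : Prop := Game.AdamWins M.aLetterGame

/-- `M` is good-for-games: it is both ∃GFG and ∀GFG. -/
def GFG (M : AltAut A) : Prop := M.ExistsGFG ∧ M.ForallGFG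

/-- `b` is a box of `M` over the letter `a`: a simultaneous resolution, for
every state `q`, of the disjunctions of `δ(q, a)`; `b q` is the set of states
Adam can reach from `q` against this resolution. -/
def IsBox (M : AltAut A) (a : A) (b : M.Q → Set M.Q) : Prop :=
  ∀ q, b q ∈ PosBool.eveRes (M.delta q a)

/-- The boxes of `M` (over all letters), as an alphabet. -/
def Boxes (M : AltAut A) : Type := {β : A × (M.Q → Set M.Q) // M.IsBox β.1 β.2}

/-- A sequence of (letter, box) pairs is universally accepting for `M` if every
path through it starting at the initial state is accepting. -/
def UnivAcceptingRaw (M : AltAut A) (u : ℕ → A × (M.Q → Set M.Q)) : Prop :=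
  ∀ ρ : ℕ → M.Q, ρ 0 = M.init → (∀ n, ρ (n+1) ∈ (u n).2 (ρ n)) →
    M.acc fun n => (ρ n, (u n).1, ρ (n+1))

/-- The set of universally accepting words over the alphabet of boxes of `M`. -/
def UnivAccLang (M : AltAut A) : Set (ℕ → M.Boxes) :=
  {u | M.UnivAcceptingRaw fun n => (u n).val}

/-- The size of an automaton: the maximum of the size of the alphabet, the
number of states and the total length of the transition conditions. -/
noncomputable def sizeN (M : AltAut A) : ℕ :=
  max (Nat.card A) (max (Nat.card M.Q) (∑ᶠ q : M.Q, ∑ᶠ a : A, (M.delta q a).size))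

/-- The two-token game `G₂(M)` on an alternating automaton `M`.  A configuration
is a triple of states `(p, q₁, q₂)`; in each turn Adam picks a letter `a`, the
players resolve `δ_M(p, a)` (Eve the disjunctions, Adam the conjunctions),
producing a transition of Eve's token, and then resolve `δ_{M̄}(q₁, a)` and
`δ_{M̄}(q₂, a)` in the dual automaton (Adam the disjunctions, Eve the
conjunctions), producing transitions of Adam's two tokens.  Eve wins iff her
path is accepting in `M`, or both of Adam's paths are rejecting in `M`. -/
def G2 (M : AltAut A) :
    Game (M.Q × M.Q × M.Q) A (Set M.Q) (M.Q × Set M.Q × Set M.Q) (M.Q × M.Q) Unit Unit where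
  init := (M.init, M.init, M.init)
  A1 _ := Set.univ
  E1 c a := PosBool.eveRes (M.delta c.1 a)
  A2 c a S := {m | m.1 ∈ S ∧ m.2.1 ∈ PosBool.eveRes (M.dual.delta c.2.1 a) ∧
                   m.2.2 ∈ PosBool.eveRes (M.dual.delta c.2.2 a)}
  E2 _ _ _ m := {x | x.1 ∈ m.2.1 ∧ x.2 ∈ m.2.2}
  A3 _ _ _ _ _ := Set.univ
  E3 _ _ _ _ _ _ := Set.univ
  next c _ _ m x _ _ := (m.1, x.1, x.2)
  win ρ :=
    M.acc (fun n => ((ρ n).st.1, (ρ n).a1, (ρ n).a2.1)) ∨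
    (¬ M.acc (fun n => ((ρ n).st.2.1, (ρ n).a1, (ρ n).e2.1)) ∧
     ¬ M.acc (fun n => ((ρ n).st.2.2, (ρ n).a1, (ρ n).e2.2)))

end AltAut

/-! ### Deterministic and nondeterministic parity automata -/

/-- A deterministic parity automaton over the alphabet `A` (priorities on
transitions). -/
structure DPA (A : Type) where
  S : Type
  init : S
  step : S → A → S
  prio : S → A → ℕ

namespace DPA

variable {A : Type}

/-- The (unique) run of `D` on `w`. -/
def run (D : DPA A) (w : ℕ → A) : ℕ → D.S
  | 0 => D.init
  | n + 1 => D.step (D.run w n) (w n)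

/-- The language of `D`. -/
def Lang (D : DPA A) : Set (ℕ → A) :=
  {w | ParityAccept fun n => D.prio (D.run w n) (w n)}

end DPA

/-- A nondeterministic parity automaton over the alphabet `A`, with an abstract
set `T` of transitions, each with a source, a letter, a destination and a
priority. -/
structure NPA (A : Type) where
  S : Type
  init : S
  T : Type
  src : T → S
  lab : T → A
  dst : T → S
  prio : T → ℕ

namespace NPA

variable {A : Type}

/-- `r` is a run of `N` over `w`. -/
def IsRun (N : NPA A) (w : ℕ → A) (r : ℕ → N.T) : Prop :=
  N.src (r 0) = N.init ∧ (∀ n, N.src (r (n+1)) = N.dst (r n)) ∧ ∀ n, N.lab (r n) = w n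

/-- The language of `N`: the words admitting an accepting run. -/
def Lang (N : NPA A) : Set (ℕ → A) :=
  {w | ∃ r, N.IsRun w r ∧ ParityAccept fun n => N.prio (r n)}

/-- The letter game on `N`: Adam picks letters, Eve picks transitions; Eve wins
iff the word played is not in `L(N)` or her run is accepting. -/
def letterGame (N : NPA A) : Game N.S A N.T Unit Unit Unit Unit where
  init := N.init
  A1 _ := Set.univ
  E1 s a := {t | N.src t = s ∧ N.lab t = a}
  A2 _ _ _ := Set.univ
  E2 _ _ _ _ := Set.univ
  A3 _ _ _ _ _ := Set.univ
  E3 _ _ _ _ _ _ := Set.univ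
  next _ _ t _ _ _ _ := N.dst t
  win ρ := (fun n => (ρ n).a1) ∉ N.Lang ∨ ParityAccept fun n => N.prio (ρ n).e1

/-- `N` is good-for-games. -/
def GFG (N : NPA A) : Prop := Game.EveWins N.letterGame

/-- The two-token game `G₂(N)` on a nondeterministic automaton `N`: Adam picks
a letter, Eve picks a transition for her token, Adam picks transitions for his
two tokens.  Eve wins iff her run is accepting or both of Adam's runs are
rejecting. -/
def G2 (N : NPA A) : Game (N.S × N.S × N.S) A N.T (N.T × N.T) Unit Unit Unit where
  init := (N.init, N.init, N.init)
  A1 _ := Set.univ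
  E1 c a := {t | N.src t = c.1 ∧ N.lab t = a}
  A2 c a _ := {m | N.src m.1 = c.2.1 ∧ N.lab m.1 = a ∧ N.src m.2 = c.2.2 ∧ N.lab m.2 = a}
  E2 _ _ _ _ := Set.univ
  A3 _ _ _ _ _ := Set.univ
  E3 _ _ _ _ _ _ := Set.univ
  next _ _ t m _ _ _ := (N.dst t, N.dst m.1, N.dst m.2)
  win ρ :=
    ParityAccept (fun n => N.prio (ρ n).e1) ∨
    (¬ ParityAccept (fun n => N.prio (ρ n).a2.1) ∧
     ¬ ParityAccept (fun n => N.prio (ρ n).a2.2))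

end NPA

/-- The nondeterministic parity automaton `A^□` obtained from an alternating
automaton `M` and a deterministic parity automaton `B` over the alphabet of
boxes of `M`: upon reading a letter `a`, it nondeterministically chooses a box
of `M` over `a` and follows the transition of `B` over that box. -/
def boxNPA {A : Type} (M : AltAut A) (B : DPA M.Boxes) : NPA A where
  S := B.S
  init := B.init
  T := B.S × M.Boxes
  src t := t.1
  lab t := t.2.val.1
  dst t := B.step t.1 t.2
  prio t := B.prio t.1 t.2

/-! ### Statement 18

Let `A` be an alternating Büchi automaton and let `B` be the nondeterministic
Büchi automaton obtained from `A` by the breakpoint (Miyano–Hayashi)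
construction.  Then `A` is ∃GFG iff `B` is GFG. -/

attribute [local instance] Classical.propDecidable

/-- The breakpoint (Miyano–Hayashi) construction: states of `B` are pairs
`(S, O)` of sets of states of `A`, where `S` tracks the set of states Adam's
resolutions of the conjunctions could reach under Eve's current resolution of
the disjunctions, and `O` tracks the states that still owe a visit to an
accepting transition since the last breakpoint.  The nondeterminism of `B`
corresponds to Eve's choice of a box (a simultaneous resolution of the
disjunctions for all states); a transition is accepting (Büchi, encoded with
priorities `{1, 2}`) exactly when `O` becomes empty (a breakpoint), in which
case `O` is reset to the new `S`. -/
noncomputable def breakpointNBW {Alph : Type} (M : AltAut Alph) (F : Set (M.Q × Alph × M.Q)) :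
    NPA Alph where
  S := Set M.Q × Set M.Q
  init := ({M.init}, ∅)
  T := (Set M.Q × Set M.Q) × M.Boxes
  src t := t.1
  lab t := t.2.val.1
  dst t :=
    let S' := {q' | ∃ q ∈ t.1.1, q' ∈ t.2.val.2 q}
    let O' := {q' | ∃ q ∈ t.1.2, q' ∈ t.2.val.2 q ∧ (q, t.2.val.1, q') ∉ F}
    (S', if O' = ∅ then S' else O')
  prio t :=
    if {q' | ∃ q ∈ t.1.2, q' ∈ t.2.val.2 q ∧ (q, t.2.val.1, q') ∉ F} = ∅ then 2 else 1

/-! ### Auxiliary machinery for the proof -/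

namespace BreakpointProof

open PosBool

/-- Every positive Boolean formula has at least one Eve-resolution. -/
theorem eveRes_nonempty {Q : Type} : ∀ φ : PosBool Q, ∃ s, s ∈ φ.eveRes
  | PosBool.atom q => ⟨{q}, rfl⟩
  | PosBool.and f g => by
      obtain ⟨u, hu⟩ := eveRes_nonempty f
      obtain ⟨v, hv⟩ := eveRes_nonempty g
      exact ⟨u ∪ v, ⟨u, hu, v, hv, rfl⟩⟩
  | PosBool.or f g => by
      obtain ⟨u, hu⟩ := eveRes_nonempty f
      exact ⟨u, Or.inl hu⟩

/-- Every Eve-resolution is a nonempty set. -/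
theorem eveRes_mem_nonempty {Q : Type} : ∀ (φ : PosBool Q) (s : Set Q),
    s ∈ φ.eveRes → s.Nonempty
  | PosBool.atom q, s, hs => by
      rw [show s = {q} from hs]; exact ⟨q, rfl⟩
  | PosBool.and f g, s, hs => by
      obtain ⟨u, hu, v, hv, rfl⟩ := hs
      obtain ⟨x, hx⟩ := eveRes_mem_nonempty f u hu
      exact ⟨x, Or.inl hx⟩
  | PosBool.or f g, s, hs => by
      rcases hs with h | h
      · exact eveRes_mem_nonempty f s h
      · exact eveRes_mem_nonempty g s h

/-- If a sequence takes only the values 1 and 2, parity acceptance is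
equivalent to seeing 2 infinitely often. -/
theorem parity12 {f : ℕ → ℕ} (h12 : ∀ n, f n = 1 ∨ f n = 2) :
    ParityAccept f ↔ InfOften f 2 := by
  constructor
  · rintro ⟨c, hc, hcio, _⟩
    obtain ⟨m, -, hm⟩ := hcio 0
    rcases h12 m with h | h
    · exfalso; rw [h] at hm; subst hm; simp at hc
    · rw [h] at hm; subst hm; exact hcio
  · intro h
    refine ⟨2, ⟨1, rfl⟩, h, ?_⟩
    intro d hd
    obtain ⟨m, -, hm⟩ := hd 0
    rcases h12 m with h' | h' <;> omega

theorem infinite_fiber {Q : Type} [Finite Q] {s : Set ℕ} (hs : s.Infinite) (f : ℕ → Q) :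
    ∃ q, {n | n ∈ s ∧ f n = q}.Infinite := by
  by_contra h
  push_neg at h
  have hsub : s ⊆ ⋃ q : Q, {n | n ∈ s ∧ f n = q} :=
    fun n hn => Set.mem_iUnion.mpr ⟨f n, hn, rfl⟩
  exact hs ((Set.finite_iUnion h).subset hsub)

/-! #### The generic breakpoint tracking construction with histories -/

section MH

variable {Q Alph H : Type}
variable (F : Set (Q × Alph × Q)) (q0 : Q) (h0 : H)
variable (ext : ℕ → Alph → H → Q → Q → H) (ctrl : ℕ → Alph → H → Q → Set Q)

/-- The parent map: a chosen predecessor, preferring predecessors in `O`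
reached by a non-accepting transition. -/
noncomputable def parOf (n : ℕ) (a : Alph) (p : Set Q × Set Q × (Q → H)) (q' : Q) : Q :=
  if hx : ∃ q, q ∈ p.2.1 ∧ q' ∈ ctrl n a (p.2.2 q) q ∧ (q, a, q') ∉ F then hx.choose
  else if hx : ∃ q, q ∈ p.1 ∧ q' ∈ ctrl n a (p.2.2 q) q then hx.choose
  else q0

/-- One step of the breakpoint construction, with history tracking. -/
noncomputable def mhStep (n : ℕ) (a : Alph) (p : Set Q × Set Q × (Q → H)) :
    Set Q × Set Q × (Q → H) :=
  ({q' | ∃ q ∈ p.1, q' ∈ ctrl n a (p.2.2 q) q},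
   if {q' | ∃ q ∈ p.2.1, q' ∈ ctrl n a (p.2.2 q) q ∧ (q, a, q') ∉ F} = ∅
     then {q' | ∃ q ∈ p.1, q' ∈ ctrl n a (p.2.2 q) q}
     else {q' | ∃ q ∈ p.2.1, q' ∈ ctrl n a (p.2.2 q) q ∧ (q, a, q') ∉ F},
   fun q' => ext n a (p.2.2 (parOf F q0 ctrl n a p q')) (parOf F q0 ctrl n a p q') q')

variable (w : ℕ → Alph)

noncomputable def mh : ℕ → Set Q × Set Q × (Q → H)
  | 0 => ({q0}, ∅, fun _ => h0)
  | n + 1 => mhStep F q0 ext ctrl n (w n) (mh n)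

/-- The box played at step `n` at state `q`. -/
noncomputable def mhB (n : ℕ) (q : Q) : Set Q :=
  ctrl n (w n) ((mh F q0 h0 ext ctrl w n).2.2 q) q

noncomputable def mhPar (n : ℕ) (q' : Q) : Q :=
  parOf F q0 ctrl n (w n) (mh F q0 h0 ext ctrl w n) q'

/-- A breakpoint happens at step `n`. -/
def Brk (n : ℕ) : Prop :=
  {q' | ∃ q ∈ (mh F q0 h0 ext ctrl w n).2.1,
    q' ∈ mhB F q0 h0 ext ctrl w n q ∧ (q, w n, q') ∉ F} = ∅

variable {F q0 h0 ext ctrl w}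

theorem mh_S_succ (n : ℕ) :
    (mh F q0 h0 ext ctrl w (n+1)).1 =
      {q' | ∃ q ∈ (mh F q0 h0 ext ctrl w n).1, q' ∈ mhB F q0 h0 ext ctrl w n q} := rfl

theorem mh_O_succ (n : ℕ) :
    (mh F q0 h0 ext ctrl w (n+1)).2.1 =
      if {q' | ∃ q ∈ (mh F q0 h0 ext ctrl w n).2.1,
            q' ∈ mhB F q0 h0 ext ctrl w n q ∧ (q, w n, q') ∉ F} = ∅
        then (mh F q0 h0 ext ctrl w (n+1)).1
        else {q' | ∃ q ∈ (mh F q0 h0 ext ctrl w n).2.1,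
            q' ∈ mhB F q0 h0 ext ctrl w n q ∧ (q, w n, q') ∉ F} := rfl

theorem mh_H_succ (n : ℕ) (q' : Q) :
    (mh F q0 h0 ext ctrl w (n+1)).2.2 q' =
      ext n (w n) ((mh F q0 h0 ext ctrl w n).2.2 (mhPar F q0 h0 ext ctrl w n q'))
        (mhPar F q0 h0 ext ctrl w n q') q' := rfl

theorem mh_O_subset : ∀ n, (mh F q0 h0 ext ctrl w n).2.1 ⊆ (mh F q0 h0 ext ctrl w n).1
  | 0 => by intro q hq; exact absurd hq (Set.notMem_empty q)
  | n + 1 => by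
      rw [mh_O_succ]
      split
      · exact fun q hq => hq
      · rintro q' ⟨q, hq, hb, -⟩
        exact ⟨q, mh_O_subset n hq, hb⟩

theorem mh_congr {w w' : ℕ → Alph} : ∀ n, (∀ k, k < n → w k = w' k) →
    mh F q0 h0 ext ctrl w n = mh F q0 h0 ext ctrl w' n
  | 0, _ => rfl
  | n + 1, h => by
      show mhStep F q0 ext ctrl n (w n) (mh F q0 h0 ext ctrl w n) = _
      rw [mh_congr n (fun k hk => h k (Nat.lt_succ_of_lt hk)), h n (Nat.lt_succ_self n)]
      rfl

theorem mhPar_spec1 {n : ℕ} {q' : Q}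
    (hx : ∃ q, q ∈ (mh F q0 h0 ext ctrl w n).2.1 ∧ q' ∈ mhB F q0 h0 ext ctrl w n q ∧
      (q, w n, q') ∉ F) :
    mhPar F q0 h0 ext ctrl w n q' ∈ (mh F q0 h0 ext ctrl w n).2.1 ∧
      q' ∈ mhB F q0 h0 ext ctrl w n (mhPar F q0 h0 ext ctrl w n q') ∧
      (mhPar F q0 h0 ext ctrl w n q', w n, q') ∉ F := by
  have hx' : ∃ q, q ∈ (mh F q0 h0 ext ctrl w n).2.1 ∧
      q' ∈ ctrl n (w n) ((mh F q0 h0 ext ctrl w n).2.2 q) q ∧ (q, w n, q') ∉ F := hx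
  unfold mhPar parOf
  rw [dif_pos hx']
  exact hx'.choose_spec

theorem mhPar_spec2 {n : ℕ} {q' : Q}
    (hx : ∃ q, q ∈ (mh F q0 h0 ext ctrl w n).1 ∧ q' ∈ mhB F q0 h0 ext ctrl w n q) :
    mhPar F q0 h0 ext ctrl w n q' ∈ (mh F q0 h0 ext ctrl w n).1 ∧
      q' ∈ mhB F q0 h0 ext ctrl w n (mhPar F q0 h0 ext ctrl w n q') := by
  have hx' : ∃ q, q ∈ (mh F q0 h0 ext ctrl w n).1 ∧
      q' ∈ ctrl n (w n) ((mh F q0 h0 ext ctrl w n).2.2 q) q := hx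
  unfold mhPar parOf
  by_cases h1 : ∃ q, q ∈ (mh F q0 h0 ext ctrl w n).2.1 ∧
      q' ∈ ctrl n (w n) ((mh F q0 h0 ext ctrl w n).2.2 q) q ∧ (q, w n, q') ∉ F
  · rw [dif_pos h1]
    exact ⟨mh_O_subset n h1.choose_spec.1, h1.choose_spec.2.1⟩
  · rw [dif_neg h1, dif_pos hx']
    exact hx'.choose_spec

theorem par_mem_of_S {n : ℕ} {q' : Q} (hq : q' ∈ (mh F q0 h0 ext ctrl w (n+1)).1) :
    mhPar F q0 h0 ext ctrl w n q' ∈ (mh F q0 h0 ext ctrl w n).1 ∧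
      q' ∈ mhB F q0 h0 ext ctrl w n (mhPar F q0 h0 ext ctrl w n q') := by
  rw [mh_S_succ] at hq
  obtain ⟨q, hq1, hq2⟩ := hq
  exact mhPar_spec2 ⟨q, hq1, hq2⟩

theorem mh_O_succ_of_not_brk {n : ℕ} (hb : ¬ Brk F q0 h0 ext ctrl w n) :
    (mh F q0 h0 ext ctrl w (n+1)).2.1 =
      {q' | ∃ q ∈ (mh F q0 h0 ext ctrl w n).2.1,
        q' ∈ mhB F q0 h0 ext ctrl w n q ∧ (q, w n, q') ∉ F} := by
  rw [mh_O_succ]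
  exact if_neg hb

theorem par_mem_of_O {n : ℕ} {q' : Q} (hb : ¬ Brk F q0 h0 ext ctrl w n)
    (hq : q' ∈ (mh F q0 h0 ext ctrl w (n+1)).2.1) :
    mhPar F q0 h0 ext ctrl w n q' ∈ (mh F q0 h0 ext ctrl w n).2.1 ∧
      q' ∈ mhB F q0 h0 ext ctrl w n (mhPar F q0 h0 ext ctrl w n q') ∧
      (mhPar F q0 h0 ext ctrl w n q', w n, q') ∉ F := by
  rw [mh_O_succ_of_not_brk hb] at hq
  obtain ⟨q, hq1, hq2, hq3⟩ := hq
  exact mhPar_spec1 ⟨q, hq1, hq2, hq3⟩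

theorem mh_O_nonempty {N m : ℕ} (hnb : ∀ k, N ≤ k → ¬ Brk F q0 h0 ext ctrl w k)
    (hm : N + 1 ≤ m) : ((mh F q0 h0 ext ctrl w m).2.1).Nonempty := by
  obtain ⟨k, rfl⟩ : ∃ k, m = k + 1 := ⟨m - 1, by omega⟩
  rw [mh_O_succ_of_not_brk (hnb k (by omega))]
  exact Set.nonempty_iff_ne_empty.mpr (hnb k (by omega))

section Anc

variable (F q0 h0 ext ctrl w)

/-- The ancestor at level `m` (for `m ≤ n`) of the state `q` at level `n`,
following the parent pointers. -/
noncomputable def ancAt : ℕ → Q → ℕ → Q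
  | 0, q, _ => q
  | n + 1, q, m =>
      if n + 1 ≤ m then q
      else ancAt n (mhPar F q0 h0 ext ctrl w n q) m

variable {F q0 h0 ext ctrl w}

theorem ancAt_le {n m : ℕ} (h : n ≤ m) (q : Q) : ancAt F q0 h0 ext ctrl w n q m = q := by
  cases n with
  | zero => rfl
  | succ n => rw [ancAt, if_pos h]

theorem ancAt_succ : ∀ {n : ℕ} {m : ℕ}, m < n → ∀ q : Q,
    ancAt F q0 h0 ext ctrl w n q m =
      mhPar F q0 h0 ext ctrl w m (ancAt F q0 h0 ext ctrl w n q (m+1))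
  | 0, m, h, q => by omega
  | n + 1, m, h, q => by
      rw [ancAt, if_neg (by omega)]
      rcases Nat.lt_or_ge m n with h' | h'
      · rw [ancAt_succ h', ancAt, if_neg (by omega)]
      · have hmn : m = n := by omega
        subst hmn
        rw [ancAt_le le_rfl, ancAt, if_pos le_rfl]

theorem ancAt_mem_S : ∀ {n : ℕ} {q : Q} {m : ℕ}, q ∈ (mh F q0 h0 ext ctrl w n).1 →
    m ≤ n → ancAt F q0 h0 ext ctrl w n q m ∈ (mh F q0 h0 ext ctrl w m).1
  | 0, q, m, hq, hm => by
      rw [Nat.le_zero.mp hm]; exact hq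
  | n + 1, q, m, hq, hm => by
      rcases Nat.lt_or_ge m (n+1) with h' | h'
      · rw [ancAt, if_neg (by omega)]
        exact ancAt_mem_S (par_mem_of_S hq).1 (by omega)
      · rw [ancAt_le h']
        have : m = n + 1 := by omega
        rw [this]; exact hq

theorem ancAt_mem_O {N : ℕ} (hnb : ∀ k, N ≤ k → ¬ Brk F q0 h0 ext ctrl w k) :
    ∀ {n : ℕ} {q : Q} {m : ℕ}, q ∈ (mh F q0 h0 ext ctrl w n).2.1 →
    N + 1 ≤ m → m ≤ n → ancAt F q0 h0 ext ctrl w n q m ∈ (mh F q0 h0 ext ctrl w m).2.1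
  | 0, q, m, hq, hN, hm => by omega
  | n + 1, q, m, hq, hN, hm => by
      rcases Nat.lt_or_ge m (n+1) with h' | h'
      · rw [ancAt, if_neg (by omega)]
        exact ancAt_mem_O hnb (par_mem_of_O (hnb n (by omega)) hq).1 hN (by omega)
      · rw [ancAt_le h']
        have : m = n + 1 := by omega
        rw [this]; exact hq

end Anc

/-- The main König-style lemma: if no breakpoint ever happens from step `N`
on, then there is an infinite path through the boxes, coherent with the
history assignment, whose transitions from step `N` on all avoid `F`. -/
theorem mh_konig [Finite Q] {N : ℕ}
    (hnb : ∀ k, N ≤ k → ¬ Brk F q0 h0 ext ctrl w k) :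
    ∃ π : ℕ → Q, π 0 = q0 ∧
      (∀ m, π (m+1) ∈ mhB F q0 h0 ext ctrl w m (π m)) ∧
      (∀ m, (mh F q0 h0 ext ctrl w (m+1)).2.2 (π (m+1)) =
        ext m (w m) ((mh F q0 h0 ext ctrl w m).2.2 (π m)) (π m) (π (m+1))) ∧
      (∀ m, N ≤ m → (π m, w m, π (m+1)) ∉ F) := by
  classical
  -- witnesses in O
  set o : ℕ → Q := fun n =>
    if h : ((mh F q0 h0 ext ctrl w n).2.1).Nonempty then h.choose else q0 with ho_def
  have ho : ∀ n, N + 1 ≤ n → o n ∈ (mh F q0 h0 ext ctrl w n).2.1 := by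
    intro n hn
    have h := mh_O_nonempty hnb hn
    simp only [ho_def, dif_pos h]
    exact h.choose_spec
  set T : ℕ → Q → Set ℕ := fun m q =>
    {n | m ≤ n ∧ N + 1 ≤ n ∧ ancAt F q0 h0 ext ctrl w n (o n) m = q} with hT_def
  have base : ∃ q, (T 0 q).Infinite := by
    obtain ⟨q, hq⟩ := infinite_fiber (Set.Ici_infinite (N+1))
      (fun n => ancAt F q0 h0 ext ctrl w n (o n) 0)
    refine ⟨q, hq.mono ?_⟩
    rintro n ⟨hn1, hn2⟩
    exact ⟨Nat.zero_le n, hn1, hn2⟩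
  have step : ∀ m q, (T m q).Infinite →
      ∃ q', mhPar F q0 h0 ext ctrl w m q' = q ∧ (T (m+1) q').Infinite := by
    intro m q hq
    have hs : (T m q \ Set.Iic m).Infinite := hq.diff (Set.finite_Iic m)
    obtain ⟨q', hq'⟩ := infinite_fiber hs (fun n => ancAt F q0 h0 ext ctrl w n (o n) (m+1))
    have hsub : {n | n ∈ T m q \ Set.Iic m ∧
        ancAt F q0 h0 ext ctrl w n (o n) (m+1) = q'} ⊆ T (m+1) q' := by
      rintro n ⟨⟨⟨hn1, hn2, hn3⟩, hn4⟩, hn5⟩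
      have : m + 1 ≤ n := by simp only [Set.mem_Iic] at hn4; omega
      exact ⟨this, hn2, hn5⟩
    obtain ⟨n, ⟨⟨hn1, hn2, hn3⟩, hn4⟩, hn5⟩ := hq'.nonempty
    have hmn : m < n := by simp only [Set.mem_Iic] at hn4; omega
    refine ⟨q', ?_, hq'.mono hsub⟩
    rw [← hn5, ← ancAt_succ hmn, hn3]
  -- build the branch
  let build : ∀ m : ℕ, {q : Q // (T m q).Infinite} := fun m =>
    Nat.rec ⟨base.choose, base.choose_spec⟩
      (fun m p => ⟨(step m p.1 p.2).choose, (step m p.1 p.2).choose_spec.2⟩) m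
  set π : ℕ → Q := fun m => (build m).1 with hπ_def
  have hpar : ∀ m, mhPar F q0 h0 ext ctrl w m (π (m+1)) = π m := by
    intro m
    exact (step m (build m).1 (build m).2).choose_spec.1
  have hTm : ∀ m, (T m (π m)).Infinite := fun m => (build m).2
  have hS : ∀ m, π m ∈ (mh F q0 h0 ext ctrl w m).1 := by
    intro m
    obtain ⟨n, hn1, hn2, hn3⟩ := (hTm m).nonempty
    rw [← hn3]
    exact ancAt_mem_S (mh_O_subset n (ho n hn2)) hn1
  have hO : ∀ m, N ≤ m → π (m+1) ∈ (mh F q0 h0 ext ctrl w (m+1)).2.1 := by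
    intro m hm
    obtain ⟨n, hn1, hn2, hn3⟩ := (hTm (m+1)).nonempty
    rw [← hn3]
    exact ancAt_mem_O hnb (ho n hn2) (by omega) hn1
  have hπ0 : π 0 = q0 := hS 0
  refine ⟨π, hπ0, ?_, ?_, ?_⟩
  · intro m
    have := (par_mem_of_S (hS (m+1))).2
    rwa [hpar] at this
  · intro m
    rw [mh_H_succ, hpar]
  · intro m hm
    have := par_mem_of_O (hnb m hm) (hO m hm)
    rw [hpar] at this
    exact this.2.2

end MH

end BreakpointProof

namespace BreakpointProof

/-- If the `(S, O)` sets evolve by the breakpoint rules along boxes `b`,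
breakpoints happen infinitely often, and `q` is a path through the boxes
starting in `S 0`, then the path visits `F` infinitely often. -/
theorem trap {Q Alph : Type} (F : Set (Q × Alph × Q)) (w : ℕ → Alph) (b : ℕ → Q → Set Q)
    (S O : ℕ → Set Q)
    (hS : ∀ n, S (n+1) = {q' | ∃ q ∈ S n, q' ∈ b n q})
    (hO : ∀ n, O (n+1) = if {q' | ∃ q ∈ O n, q' ∈ b n q ∧ (q, w n, q') ∉ F} = ∅
        then S (n+1) else {q' | ∃ q ∈ O n, q' ∈ b n q ∧ (q, w n, q') ∉ F})
    (q : ℕ → Q) (hq : ∀ n, q (n+1) ∈ b n (q n)) (hq0 : q 0 ∈ S 0)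
    (hacc : InfOften
      (fun n => if {q' | ∃ p ∈ O n, q' ∈ b n p ∧ (p, w n, q') ∉ F} = ∅ then 2 else 1) 2) :
    InfOftenIn (fun n => (q n, w n, q (n+1))) F := by
  intro K
  by_contra hK
  push_neg at hK
  have hqS : ∀ n, q n ∈ S n := by
    intro n
    induction n with
    | zero => exact hq0
    | succ k ih => rw [hS]; exact ⟨q k, ih, hq k⟩
  obtain ⟨m, hm, hm2⟩ := hacc K
  have hm2' : {q' | ∃ p ∈ O m, q' ∈ b m p ∧ (p, w m, q') ∉ F} = ∅ := by
    by_contra h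
    simp only [if_neg h] at hm2
    omega
  have hOq : ∀ n, m + 1 ≤ n → q n ∈ O n := by
    intro n hn
    induction n with
    | zero => omega
    | succ k ih =>
      by_cases hk : m + 1 ≤ k
      · have hmem : q (k+1) ∈ {q' | ∃ p ∈ O k, q' ∈ b k p ∧ (p, w k, q') ∉ F} :=
          ⟨q k, ih hk, hq k, hK k (by omega)⟩
        rw [hO k, if_neg (Set.nonempty_iff_ne_empty.mp ⟨_, hmem⟩)]
        exact hmem
      · have hkm : k = m := by omega
        subst hkm
        rw [hO k, if_pos hm2']
        exact hqS (k+1)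
  obtain ⟨m', hm', hp⟩ := hacc (m+1)
  have hE : {q' | ∃ p ∈ O m', q' ∈ b m' p ∧ (p, w m', q') ∉ F} = ∅ := by
    by_contra h
    simp only [if_neg h] at hp
    omega
  have hmem : q (m'+1) ∈ {q' | ∃ p ∈ O m', q' ∈ b m' p ∧ (p, w m', q') ∉ F} :=
    ⟨q m', hOq m' hm', hq m', hK m' (by omega)⟩
  rw [hE] at hmem
  exact hmem

/-- MH soundness: if the breakpoint automaton accepts `w`, then Eve wins the
model-checking game of `M` over `w`. -/
theorem mh_sound {Alph : Type} (M : AltAut Alph) (F : Set (M.Q × Alph × M.Q))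
    (hF : M.IsBuchi F) (w : ℕ → Alph) (hw : w ∈ (breakpointNBW M F).Lang) :
    Game.EveWins (M.mcGame w) := by
  obtain ⟨r, ⟨hr0, hrstep, hrlab⟩, hracc⟩ := hw
  refine ⟨⟨fun _ p _ => (r p.1).2.val.2 p.2, fun _ _ _ _ _ => (), fun _ _ _ _ _ _ _ => ()⟩, ?_⟩
  intro ρ hSt hC
  have hst1 : ∀ n, (ρ n).st.1 = n := by
    intro n
    induction n with
    | zero => rw [hSt.1]; rfl
    | succ k ih => rw [hSt.2 k]; show (ρ k).st.1 + 1 = k + 1; rw [ih]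
  have he1 : ∀ n, (ρ n).e1 = (r n).2.val.2 (ρ n).st.2 := by
    intro n
    rw [(hC n).1]
    show (r (ρ n).st.1).2.val.2 (ρ n).st.2 = _
    rw [hst1]
  have hlab : ∀ n, (r n).2.val.1 = w n := hrlab
  refine ⟨?_, ?_, ?_, ?_⟩
  · intro n _ _
    show (ρ n).e1 ∈ PosBool.eveRes (M.delta (ρ n).st.2 (w (ρ n).st.1))
    rw [he1, hst1]
    have := (r n).2.property (ρ n).st.2
    rwa [hlab n] at this
  · intro n _ _ _ _
    exact Set.mem_univ _
  · intro n _ _ _ _ _ _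
    exact Set.mem_univ _
  · intro hleg
    set qs : ℕ → M.Q := fun n => (ρ n).st.2 with hqs
    have hq0 : qs 0 = M.init := by
      show (ρ 0).st.2 = M.init
      rw [hSt.1]
      rfl
    have hqstep : ∀ n, qs (n+1) = (ρ n).a2 := by
      intro n
      show (ρ (n+1)).st.2 = (ρ n).a2
      rw [hSt.2 n]
      rfl
    have ha2 : ∀ n, qs (n+1) ∈ (r n).2.val.2 (qs n) := by
      intro n
      have := (hleg n).2.2.1
      rw [hqstep n]
      show (ρ n).a2 ∈ _
      rw [← he1 n]
      exact this
    have hwin : (fun n => ((ρ n).st.2, w n, (ρ n).a2)) = fun n => (qs n, w n, qs (n+1)) :=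
      funext fun n => by rw [hqstep n]
    have hSr : ∀ n, (r (n+1)).1.1 = {q' | ∃ q ∈ (r n).1.1, q' ∈ (r n).2.val.2 q} := by
      intro n
      rw [show (r (n+1)).1 = (breakpointNBW M F).dst (r n) from hrstep n]
      rfl
    have hOr : ∀ n, (r (n+1)).1.2 =
        if {q' | ∃ q ∈ (r n).1.2, q' ∈ (r n).2.val.2 q ∧ (q, w n, q') ∉ F} = ∅
          then {q' | ∃ q ∈ (r n).1.1, q' ∈ (r n).2.val.2 q}
          else {q' | ∃ q ∈ (r n).1.2, q' ∈ (r n).2.val.2 q ∧ (q, w n, q') ∉ F} := by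
      intro n
      rw [show (r (n+1)).1 = (breakpointNBW M F).dst (r n) from hrstep n]
      show (if {q' | ∃ q ∈ (r n).1.2, q' ∈ (r n).2.val.2 q ∧ (q, (r n).2.val.1, q') ∉ F} = ∅
          then {q' | ∃ q ∈ (r n).1.1, q' ∈ (r n).2.val.2 q}
          else {q' | ∃ q ∈ (r n).1.2, q' ∈ (r n).2.val.2 q ∧ (q, (r n).2.val.1, q') ∉ F}) = _
      rw [hlab n]
    show M.acc fun n => ((ρ n).st.2, w n, (ρ n).a2)
    rw [hwin, hF]
    refine trap F w (fun n => (r n).2.val.2) (fun n => (r n).1.1) (fun n => (r n).1.2)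
      ?_ ?_ qs ha2 ?_ ?_
    · intro n
      exact hSr n
    · intro n
      show (r (n+1)).1.2 =
        if {q' | ∃ q ∈ (r n).1.2, q' ∈ (r n).2.val.2 q ∧ (q, w n, q') ∉ F} = ∅
          then (r (n+1)).1.1
          else {q' | ∃ q ∈ (r n).1.2, q' ∈ (r n).2.val.2 q ∧ (q, w n, q') ∉ F}
      rw [hOr n, hSr n]
    · show qs 0 ∈ (r 0).1.1
      rw [show (r 0).1 = ({M.init}, ∅) from hr0, hq0]
      rfl
    · have hprio : (fun n => (breakpointNBW M F).prio (r n)) = fun n =>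
          if {q' | ∃ p ∈ (r n).1.2, q' ∈ (r n).2.val.2 p ∧ (p, w n, q') ∉ F} = ∅
            then 2 else 1 := by
        funext n
        show (if {q' | ∃ q ∈ (r n).1.2, q' ∈ (r n).2.val.2 q ∧ (q, (r n).2.val.1, q') ∉ F} = ∅
          then 2 else 1) = _
        rw [hlab n]
      have h12 : ∀ n, (breakpointNBW M F).prio (r n) = 1 ∨ (breakpointNBW M F).prio (r n) = 2 := by
        intro n
        show (if _ = ∅ then 2 else 1) = 1 ∨ (if _ = ∅ then 2 else 1) = 2
        split
        · right; rfl
        · left; rfl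
      have := (parity12 h12).mp hracc
      rwa [hprio] at this

end BreakpointProof

namespace BreakpointProof

section MC

variable {Alph : Type} (M : AltAut Alph)

noncomputable def dflt (q : M.Q) (a : Alph) : Set M.Q :=
  (eveRes_nonempty (M.delta q a)).choose

theorem dflt_mem (q : M.Q) (a : Alph) : dflt M q a ∈ PosBool.eveRes (M.delta q a) :=
  (eveRes_nonempty (M.delta q a)).choose_spec

/-- The control function extracted from an Eve strategy in the model-checking
game (patched to always produce a legal resolution). -/
noncomputable def mcctrl (σ : Game.EStrat (ℕ × M.Q) Unit (Set M.Q) M.Q Unit Unit Unit) :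
    ℕ → Alph → List (GameRound (ℕ × M.Q) Unit (Set M.Q) M.Q Unit Unit Unit) → M.Q → Set M.Q :=
  fun n a h q =>
    if σ.f1 h (n, q) () ∈ PosBool.eveRes (M.delta q a) then σ.f1 h (n, q) () else dflt M q a

/-- The history-extension function for the model-checking game. -/
def mcext (σ : Game.EStrat (ℕ × M.Q) Unit (Set M.Q) M.Q Unit Unit Unit) :
    ℕ → Alph → List (GameRound (ℕ × M.Q) Unit (Set M.Q) M.Q Unit Unit Unit) → M.Q → M.Q →
      List (GameRound (ℕ × M.Q) Unit (Set M.Q) M.Q Unit Unit Unit) :=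
  fun n _ h q q' => h ++ [⟨(n, q), (), σ.f1 h (n, q) (), q', (), (), ()⟩]

theorem mcctrl_mem (σ : Game.EStrat (ℕ × M.Q) Unit (Set M.Q) M.Q Unit Unit Unit)
    (n : ℕ) (a : Alph) (h : List (GameRound (ℕ × M.Q) Unit (Set M.Q) M.Q Unit Unit Unit))
    (q : M.Q) : mcctrl M σ n a h q ∈ PosBool.eveRes (M.delta q a) := by
  unfold mcctrl
  split
  · assumption
  · exact dflt_mem M q a

/-- Key lemma 2: if Eve has a winning strategy in the model checking game of
`M` over `w`, then breakpoints cannot eventually stop in the associated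
tracking construction. -/
theorem key2 [Finite M.Q] (w : ℕ → Alph) {F : Set (M.Q × Alph × M.Q)} (hF : M.IsBuchi F)
    (σ : Game.EStrat (ℕ × M.Q) Unit (Set M.Q) M.Q Unit Unit Unit)
    (hσ : Game.EveWinningStrat (M.mcGame w) σ) {N : ℕ}
    (hnb : ∀ k, N ≤ k →
      ¬ Brk F M.init ([] : List (GameRound (ℕ × M.Q) Unit (Set M.Q) M.Q Unit Unit Unit))
        (mcext M σ) (mcctrl M σ) w k) : False := by
  obtain ⟨π, hπ0, hπb, hπh, hπF⟩ := mh_konig hnb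
  set L : ℕ → List (GameRound (ℕ × M.Q) Unit (Set M.Q) M.Q Unit Unit Unit) :=
    fun n => (mh F M.init [] (mcext M σ) (mcctrl M σ) w n).2.2 (π n) with hL
  set ρ : ℕ → GameRound (ℕ × M.Q) Unit (Set M.Q) M.Q Unit Unit Unit :=
    fun n => ⟨(n, π n), (), σ.f1 (L n) (n, π n) (), π (n+1), (), (), ()⟩ with hρ
  have hhist : ∀ n, Game.hist ρ n = L n := by
    intro n
    induction n with
    | zero => rfl
    | succ k ih =>
      have h1 : Game.hist ρ (k+1) = Game.hist ρ k ++ [ρ k] := by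
        unfold Game.hist
        rw [List.range_succ, List.map_append]
        rfl
      have h2 : L (k+1) = L k ++ [ρ k] := by
        show (mh F M.init [] (mcext M σ) (mcctrl M σ) w (k+1)).2.2 (π (k+1)) = _
        rw [hπh k]
        rfl
      rw [h1, h2, ih]
  have hSt : (M.mcGame w).StateOk ρ := by
    constructor
    · show ((0 : ℕ), π 0) = (0, M.init)
      rw [hπ0]
    · intro n
      rfl
  have hC : Game.ConsE σ ρ := by
    intro n
    refine ⟨?_, Subsingleton.elim _ _, Subsingleton.elim _ _⟩
    show σ.f1 (L n) (n, π n) () = σ.f1 (Game.hist ρ n) (n, π n) ()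
    rw [hhist n]
  have hE := hσ ρ hSt hC
  have hlegal : ∀ n, (M.mcGame w).RoundLegal ρ n := by
    intro n
    induction n using Nat.strong_induction_on with
    | _ n ih =>
      have hH : (M.mcGame w).Hleg ρ n := fun m hm => ih m hm
      have he1 : (ρ n).e1 ∈ (M.mcGame w).E1 (ρ n).st (ρ n).a1 := hE.1 n hH (Set.mem_univ _)
      refine ⟨Set.mem_univ _, he1, ?_, Set.mem_univ _, Set.mem_univ _, Set.mem_univ _⟩
      show π (n+1) ∈ σ.f1 (L n) (n, π n) ()
      have hb := hπb n
      have hmem : σ.f1 (L n) (n, π n) () ∈ PosBool.eveRes (M.delta (π n) (w n)) := he1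
      have heq : mcctrl M σ n (w n) (L n) (π n) = σ.f1 (L n) (n, π n) () := by
        unfold mcctrl
        rw [if_pos hmem]
      rw [← heq]
      exact hb
  have hwin : M.acc fun n => (π n, w n, π (n+1)) := hE.2.2.2 hlegal
  obtain ⟨m, hm, hmF⟩ := (hF _).mp hwin N
  exact hπF m hm hmF

/-- MH completeness: if `w ∈ L(M)` then the breakpoint automaton accepts `w`. -/
theorem mh_complete [Finite M.Q] {F : Set (M.Q × Alph × M.Q)} (hF : M.IsBuchi F)
    (w : ℕ → Alph) (hw : w ∈ M.Lang) : w ∈ (breakpointNBW M F).Lang := by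
  obtain ⟨σ, hσ⟩ := hw
  refine ⟨fun n => (((mh F M.init [] (mcext M σ) (mcctrl M σ) w n).1,
      (mh F M.init [] (mcext M σ) (mcctrl M σ) w n).2.1),
    ⟨(w n, fun q =>
        mcctrl M σ n (w n) ((mh F M.init [] (mcext M σ) (mcctrl M σ) w n).2.2 q) q),
      fun q => mcctrl_mem M σ n (w n) _ q⟩), ⟨?_, ?_, ?_⟩, ?_⟩
  · rfl
  · intro n
    rfl
  · intro n
    rfl
  · have h12 : ∀ (t : (breakpointNBW M F).T),
        (breakpointNBW M F).prio t = 1 ∨ (breakpointNBW M F).prio t = 2 := by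
      intro t
      show (if _ = ∅ then 2 else 1) = 1 ∨ (if _ = ∅ then 2 else 1) = 2
      split
      · right; rfl
      · left; rfl
    refine (parity12 (fun n => h12 _)).mpr ?_
    by_contra h
    unfold InfOften at h
    push_neg at h
    obtain ⟨K, hK⟩ := h
    refine key2 M w hF σ hσ (N := K) ?_
    intro k hk hbrk
    apply hK k hk
    exact if_pos hbrk

end MC

end BreakpointProof

namespace BreakpointProof

section EL

variable {Alph : Type} (M : AltAut Alph)

/-- The control function extracted from an Eve strategy in her letter game
(patched to always produce a legal resolution). -/
noncomputable def ectrl (σ : Game.EStrat M.Q Alph (Set M.Q) M.Q Unit Unit Unit) :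
    ℕ → Alph → List (GameRound M.Q Alph (Set M.Q) M.Q Unit Unit Unit) → M.Q → Set M.Q :=
  fun _ a h q =>
    if σ.f1 h q a ∈ PosBool.eveRes (M.delta q a) then σ.f1 h q a else dflt M q a

/-- The history-extension function for Eve's letter game. -/
def eext (σ : Game.EStrat M.Q Alph (Set M.Q) M.Q Unit Unit Unit) :
    ℕ → Alph → List (GameRound M.Q Alph (Set M.Q) M.Q Unit Unit Unit) → M.Q → M.Q →
      List (GameRound M.Q Alph (Set M.Q) M.Q Unit Unit Unit) :=
  fun _ a h q q' => h ++ [⟨q, a, σ.f1 h q a, q', (), (), ()⟩]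

theorem ectrl_mem (σ : Game.EStrat M.Q Alph (Set M.Q) M.Q Unit Unit Unit)
    (n : ℕ) (a : Alph) (h : List (GameRound M.Q Alph (Set M.Q) M.Q Unit Unit Unit))
    (q : M.Q) : ectrl M σ n a h q ∈ PosBool.eveRes (M.delta q a) := by
  unfold ectrl
  split
  · assumption
  · exact dflt_mem M q a

/-- Key lemma 1: if Eve has a winning strategy in her letter game on `M` and
breakpoints eventually stop in the associated tracking construction over `w`,
then `w ∉ L(M)`. -/
theorem key1 [Finite M.Q] {F : Set (M.Q × Alph × M.Q)} (hF : M.IsBuchi F)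
    (σ : Game.EStrat M.Q Alph (Set M.Q) M.Q Unit Unit Unit)
    (hσ : Game.EveWinningStrat M.eLetterGame σ) (w : ℕ → Alph) {N : ℕ}
    (hnb : ∀ k, N ≤ k →
      ¬ Brk F M.init ([] : List (GameRound M.Q Alph (Set M.Q) M.Q Unit Unit Unit))
        (eext M σ) (ectrl M σ) w k) : w ∉ M.Lang := by
  obtain ⟨π, hπ0, hπb, hπh, hπF⟩ := mh_konig hnb
  set L : ℕ → List (GameRound M.Q Alph (Set M.Q) M.Q Unit Unit Unit) :=
    fun n => (mh F M.init [] (eext M σ) (ectrl M σ) w n).2.2 (π n) with hL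
  set ρ : ℕ → GameRound M.Q Alph (Set M.Q) M.Q Unit Unit Unit :=
    fun n => ⟨π n, w n, σ.f1 (L n) (π n) (w n), π (n+1), (), (), ()⟩ with hρ
  have hhist : ∀ n, Game.hist ρ n = L n := by
    intro n
    induction n with
    | zero => rfl
    | succ k ih =>
      have h1 : Game.hist ρ (k+1) = Game.hist ρ k ++ [ρ k] := by
        unfold Game.hist
        rw [List.range_succ, List.map_append]
        rfl
      have h2 : L (k+1) = L k ++ [ρ k] := by
        show (mh F M.init [] (eext M σ) (ectrl M σ) w (k+1)).2.2 (π (k+1)) = _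
        rw [hπh k]
        rfl
      rw [h1, h2, ih]
  have hSt : M.eLetterGame.StateOk ρ := by
    constructor
    · exact hπ0
    · intro n
      rfl
  have hC : Game.ConsE σ ρ := by
    intro n
    refine ⟨?_, Subsingleton.elim _ _, Subsingleton.elim _ _⟩
    show σ.f1 (L n) (π n) (w n) = σ.f1 (Game.hist ρ n) (π n) (w n)
    rw [hhist n]
  have hE := hσ ρ hSt hC
  have hlegal : ∀ n, M.eLetterGame.RoundLegal ρ n := by
    intro n
    induction n using Nat.strong_induction_on with
    | _ n ih =>
      have hH : M.eLetterGame.Hleg ρ n := fun m hm => ih m hm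
      have he1 : (ρ n).e1 ∈ M.eLetterGame.E1 (ρ n).st (ρ n).a1 := hE.1 n hH (Set.mem_univ _)
      refine ⟨Set.mem_univ _, he1, ?_, Set.mem_univ _, Set.mem_univ _, Set.mem_univ _⟩
      show π (n+1) ∈ σ.f1 (L n) (π n) (w n)
      have hmem : σ.f1 (L n) (π n) (w n) ∈ PosBool.eveRes (M.delta (π n) (w n)) := he1
      have heq : ectrl M σ n (w n) (L n) (π n) = σ.f1 (L n) (π n) (w n) := by
        unfold ectrl
        rw [if_pos hmem]
      rw [← heq]
      exact hπb n
  have hwin := hE.2.2.2 hlegal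
  rcases hwin with hwin | hwin
  · exact hwin
  · exfalso
    have hacc : M.acc fun n => (π n, w n, π (n+1)) := hwin
    obtain ⟨m, hm, hmF⟩ := (hF _).mp hacc N
    exact hπF m hm hmF

end EL

end BreakpointProof

namespace BreakpointProof

/-- Direction 1: if `M` is ∃GFG then the breakpoint automaton is GFG. -/
theorem dir1 {Alph : Type} (M : AltAut Alph) [Finite M.Q] (F : Set (M.Q × Alph × M.Q))
    (hF : M.IsBuchi F) (h : M.ExistsGFG) : (breakpointNBW M F).GFG := by
  obtain ⟨σ, hσ⟩ := h
  refine ⟨⟨fun hist s a =>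
      (s, ⟨(a, fun q => ectrl M σ hist.length a
          ((mh F M.init [] (eext M σ) (ectrl M σ)
            (fun k => (hist.map (fun r => r.a1)).getD k a) hist.length).2.2 q) q),
        fun q => ectrl_mem M σ hist.length a _ q⟩),
    fun _ _ _ _ _ => (), fun _ _ _ _ _ _ _ => ()⟩, ?_⟩
  intro ρ hSt hC
  set w : ℕ → Alph := fun n => (ρ n).a1 with hwdef
  have hlen : ∀ n, (Game.hist ρ n).length = n := by intro n; simp [Game.hist]
  have hws : ∀ n k, k < n → ((Game.hist ρ n).map (fun r => r.a1)).getD k (w n) = w k := by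
    intro n k hk
    rw [List.getD_eq_getElem _ _ (by simp [Game.hist, hk])]
    simp [Game.hist, hk]
    rfl
  have hmh : ∀ n, mh F M.init [] (eext M σ) (ectrl M σ)
      (fun k => ((Game.hist ρ n).map (fun r => r.a1)).getD k (w n)) n =
      mh F M.init [] (eext M σ) (ectrl M σ) w n := fun n =>
    mh_congr n (fun k hk => hws n k hk)
  have he1src : ∀ n, ((ρ n).e1).1 = (ρ n).st := by intro n; rw [(hC n).1]
  have he1lab : ∀ n, ((ρ n).e1).2.val.1 = w n := by intro n; rw [(hC n).1]
  have he1box : ∀ n, ((ρ n).e1).2.val.2 =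
      fun q => ectrl M σ n (w n)
        ((mh F M.init [] (eext M σ) (ectrl M σ) w n).2.2 q) q := by
    intro n
    rw [(hC n).1]
    show (fun q => ectrl M σ (Game.hist ρ n).length (w n)
      ((mh F M.init [] (eext M σ) (ectrl M σ)
        (fun k => ((Game.hist ρ n).map (fun r => r.a1)).getD k (w n))
        (Game.hist ρ n).length).2.2 q) q) = _
    rw [hlen n, hmh n]
  have hstS : ∀ n, (ρ n).st =
      ((mh F M.init [] (eext M σ) (ectrl M σ) w n).1,
       (mh F M.init [] (eext M σ) (ectrl M σ) w n).2.1) := by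
    intro n
    induction n with
    | zero => rw [hSt.1]; rfl
    | succ k ih =>
      rw [hSt.2 k]
      show (breakpointNBW M F).dst ((ρ k).e1) = _
      have h1 : (breakpointNBW M F).dst ((ρ k).e1) =
          ({q' | ∃ q ∈ ((ρ k).e1).1.1, q' ∈ ((ρ k).e1).2.val.2 q},
           if {q' | ∃ q ∈ ((ρ k).e1).1.2,
                q' ∈ ((ρ k).e1).2.val.2 q ∧ (q, ((ρ k).e1).2.val.1, q') ∉ F} = ∅
             then {q' | ∃ q ∈ ((ρ k).e1).1.1, q' ∈ ((ρ k).e1).2.val.2 q}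
             else {q' | ∃ q ∈ ((ρ k).e1).1.2,
                q' ∈ ((ρ k).e1).2.val.2 q ∧ (q, ((ρ k).e1).2.val.1, q') ∉ F}) := rfl
      rw [h1, he1src k, he1box k, he1lab k, ih]
      rfl
  refine ⟨?_, ?_, ?_, ?_⟩
  · intro n _ _
    exact ⟨he1src n, he1lab n⟩
  · intro n _ _ _ _
    exact Set.mem_univ _
  · intro n _ _ _ _ _ _
    exact Set.mem_univ _
  · intro hleg
    by_cases hpar : ParityAccept fun n => (breakpointNBW M F).prio ((ρ n).e1)
    · right; exact hpar
    · left
      intro hwN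
      have hwM : w ∈ M.Lang := mh_sound M F hF w hwN
      have hprio : ∀ m, (breakpointNBW M F).prio ((ρ m).e1) =
          if {q' | ∃ q ∈ (mh F M.init [] (eext M σ) (ectrl M σ) w m).2.1,
              q' ∈ ectrl M σ m (w m)
                ((mh F M.init [] (eext M σ) (ectrl M σ) w m).2.2 q) q ∧
              (q, w m, q') ∉ F} = ∅ then 2 else 1 := by
        intro m
        show (if {q' | ∃ q ∈ ((ρ m).e1).1.2,
            q' ∈ ((ρ m).e1).2.val.2 q ∧ (q, ((ρ m).e1).2.val.1, q') ∉ F} = ∅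
          then 2 else 1) = _
        rw [he1src m, he1box m, he1lab m, hstS m]
      have h12 : ∀ m, (breakpointNBW M F).prio ((ρ m).e1) = 1 ∨
          (breakpointNBW M F).prio ((ρ m).e1) = 2 := by
        intro m
        rw [hprio m]
        split
        · right; rfl
        · left; rfl
      rw [parity12 h12] at hpar
      unfold InfOften at hpar
      push_neg at hpar
      obtain ⟨K, hK⟩ := hpar
      refine key1 M hF σ hσ w (N := K) ?_ hwM
      intro k hk hbrk
      apply hK k hk
      rw [hprio k]
      exact if_pos hbrk

end BreakpointProof

namespace BreakpointProof

section DIR2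

variable {Alph : Type} (M : AltAut Alph) (F : Set (M.Q × Alph × M.Q))

/-- One step of the reconstruction of the play of the letter game on the
breakpoint automaton from the sequence of letters. -/
noncomputable def plStep
    (σN : Game.EStrat (breakpointNBW M F).S Alph (breakpointNBW M F).T Unit Unit Unit Unit)
    (p : (breakpointNBW M F).S ×
      List (GameRound (breakpointNBW M F).S Alph (breakpointNBW M F).T Unit Unit Unit Unit))
    (a : Alph) :
    (breakpointNBW M F).S ×
      List (GameRound (breakpointNBW M F).S Alph (breakpointNBW M F).T Unit Unit Unit Unit) :=
  ((breakpointNBW M F).dst (σN.f1 p.2 p.1 a),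
   p.2 ++ [⟨p.1, a, σN.f1 p.2 p.1 a, (), (), (), ()⟩])

noncomputable def pl
    (σN : Game.EStrat (breakpointNBW M F).S Alph (breakpointNBW M F).T Unit Unit Unit Unit)
    (l : List Alph) :
    (breakpointNBW M F).S ×
      List (GameRound (breakpointNBW M F).S Alph (breakpointNBW M F).T Unit Unit Unit Unit) :=
  l.foldl (plStep M F σN) ((breakpointNBW M F).init, [])

theorem pl_concat (σN : Game.EStrat (breakpointNBW M F).S Alph (breakpointNBW M F).T Unit Unit Unit Unit)
    (l : List Alph) (a : Alph) :
    pl M F σN (l ++ [a]) = plStep M F σN (pl M F σN l) a := by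
  unfold pl
  rw [List.foldl_append]
  rfl

/-- Direction 2: if the breakpoint automaton is GFG then `M` is ∃GFG. -/
theorem dir2 [Finite M.Q] (hF : M.IsBuchi F) (h : (breakpointNBW M F).GFG) :
    M.ExistsGFG := by
  obtain ⟨σN, hσN⟩ := h
  refine ⟨⟨fun eh q a =>
      if (σN.f1 (pl M F σN (eh.map (fun r => r.a1))).2
            (pl M F σN (eh.map (fun r => r.a1))).1 a).2.val.2 q ∈
          PosBool.eveRes (M.delta q a)
        then (σN.f1 (pl M F σN (eh.map (fun r => r.a1))).2
            (pl M F σN (eh.map (fun r => r.a1))).1 a).2.val.2 q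
        else dflt M q a,
    fun _ _ _ _ _ => (), fun _ _ _ _ _ _ _ => ()⟩, ?_⟩
  intro ρ hSt hC
  set w : ℕ → Alph := fun n => (ρ n).a1 with hwdef
  have hmapa : ∀ n, (Game.hist ρ n).map (fun r => r.a1) = (List.range n).map w := by
    intro n
    unfold Game.hist
    rw [List.map_map]
    rfl
  set NP : ℕ → (breakpointNBW M F).S ×
      List (GameRound (breakpointNBW M F).S Alph (breakpointNBW M F).T Unit Unit Unit Unit) :=
    fun n => pl M F σN ((List.range n).map w) with hNPdef
  have hNP0 : NP 0 = ((breakpointNBW M F).init, []) := by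
    show pl M F σN ((List.range 0).map w) = _
    rw [List.range_zero]
    rfl
  have hstep : ∀ n, NP (n+1) = plStep M F σN (NP n) (w n) := by
    intro n
    show pl M F σN ((List.range (n+1)).map w) = _
    rw [List.range_succ, List.map_append]
    exact pl_concat M F σN _ _
  set ρN : ℕ → GameRound (breakpointNBW M F).S Alph (breakpointNBW M F).T Unit Unit Unit Unit :=
    fun n => ⟨(NP n).1, w n, σN.f1 (NP n).2 (NP n).1 (w n), (), (), (), ()⟩ with hρNdef
  have hhistN : ∀ n, Game.hist ρN n = (NP n).2 := by
    intro n
    induction n with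
    | zero => rw [hNP0]; rfl
    | succ k ih =>
      have h1 : Game.hist ρN (k+1) = Game.hist ρN k ++ [ρN k] := by
        unfold Game.hist
        rw [List.range_succ, List.map_append]
        rfl
      have h2 : (NP (k+1)).2 = (NP k).2 ++ [ρN k] := by
        rw [hstep k]
        rfl
      rw [h1, h2, ih]
  have hStN : (breakpointNBW M F).letterGame.StateOk ρN := by
    constructor
    · show (NP 0).1 = _
      rw [hNP0]
      rfl
    · intro n
      show (NP (n+1)).1 = _
      rw [hstep n]
      rfl
  have hCN : Game.ConsE σN ρN := by
    intro n
    refine ⟨?_, Subsingleton.elim _ _, Subsingleton.elim _ _⟩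
    show σN.f1 (NP n).2 (NP n).1 (w n) = _
    rw [hhistN n]
  have hEN := hσN ρN hStN hCN
  have hlegN : ∀ n, (breakpointNBW M F).letterGame.RoundLegal ρN n := by
    intro n
    induction n using Nat.strong_induction_on with
    | _ n ih =>
      have hH : (breakpointNBW M F).letterGame.Hleg ρN n := fun m hm => ih m hm
      exact ⟨Set.mem_univ _, hEN.1 n hH (Set.mem_univ _), Set.mem_univ _, Set.mem_univ _,
        Set.mem_univ _, Set.mem_univ _⟩
  have hsrc : ∀ n, (σN.f1 (NP n).2 (NP n).1 (w n)).1 = (NP n).1 ∧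
      (σN.f1 (NP n).2 (NP n).1 (w n)).2.val.1 = w n := fun n => (hlegN n).2.1
  have he1 : ∀ n, (ρ n).e1 = (σN.f1 (NP n).2 (NP n).1 (w n)).2.val.2 ((ρ n).st) := by
    intro n
    rw [(hC n).1]
    show (if (σN.f1 (pl M F σN ((Game.hist ρ n).map (fun r => r.a1))).2
            (pl M F σN ((Game.hist ρ n).map (fun r => r.a1))).1 (w n)).2.val.2 (ρ n).st ∈
          PosBool.eveRes (M.delta (ρ n).st (w n))
        then (σN.f1 (pl M F σN ((Game.hist ρ n).map (fun r => r.a1))).2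
            (pl M F σN ((Game.hist ρ n).map (fun r => r.a1))).1 (w n)).2.val.2 (ρ n).st
        else dflt M (ρ n).st (w n)) = _
    rw [hmapa n]
    have hmem : (σN.f1 (NP n).2 (NP n).1 (w n)).2.val.2 ((ρ n).st) ∈
        PosBool.eveRes (M.delta ((ρ n).st) (w n)) := by
      have hp := (σN.f1 (NP n).2 (NP n).1 (w n)).2.property ((ρ n).st)
      rwa [(hsrc n).2] at hp
    rw [if_pos hmem]
  refine ⟨?_, ?_, ?_, ?_⟩
  · intro n _ _
    show (ρ n).e1 ∈ PosBool.eveRes (M.delta (ρ n).st (w n))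
    rw [he1 n]
    have hp := (σN.f1 (NP n).2 (NP n).1 (w n)).2.property ((ρ n).st)
    rwa [(hsrc n).2] at hp
  · intro n _ _ _ _
    exact Set.mem_univ _
  · intro n _ _ _ _ _ _
    exact Set.mem_univ _
  · intro hleg
    by_cases hL : w ∈ (breakpointNBW M F).Lang
    · have hwinN := hEN.2.2.2 hlegN
      rcases hwinN with hbad | hpar
      · exact absurd hL hbad
      · right
        set qs : ℕ → M.Q := fun n => (ρ n).st with hqsdef
        have hq2 : ∀ n, qs (n+1) = (ρ n).a2 := fun n => hSt.2 n
        have hq0 : qs 0 = M.init := hSt.1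
        have hqb : ∀ n, qs (n+1) ∈ (σN.f1 (NP n).2 (NP n).1 (w n)).2.val.2 (qs n) := by
          intro n
          rw [hq2 n]
          have ha2 := (hleg n).2.2.1
          rwa [he1 n] at ha2
        have hfe : (fun n => ((ρ n).st, (ρ n).a1, (ρ n).a2)) =
            fun n => (qs n, w n, qs (n+1)) := funext fun n => by rw [hq2 n]
        show M.acc fun n => ((ρ n).st, (ρ n).a1, (ρ n).a2)
        rw [hfe, hF]
        refine trap F w (fun n => (σN.f1 (NP n).2 (NP n).1 (w n)).2.val.2)
          (fun n => (NP n).1.1) (fun n => (NP n).1.2) ?_ ?_ qs hqb ?_ ?_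
        · intro n
          have hd : (NP (n+1)).1 = (breakpointNBW M F).dst (σN.f1 (NP n).2 (NP n).1 (w n)) := by
            rw [hstep n]
            rfl
          show (NP (n+1)).1.1 = _
          rw [hd]
          show {q' | ∃ q ∈ (σN.f1 (NP n).2 (NP n).1 (w n)).1.1,
              q' ∈ (σN.f1 (NP n).2 (NP n).1 (w n)).2.val.2 q} = _
          rw [(hsrc n).1]
        · intro n
          have hd : (NP (n+1)).1 = (breakpointNBW M F).dst (σN.f1 (NP n).2 (NP n).1 (w n)) := by
            rw [hstep n]
            rfl
          show (NP (n+1)).1.2 =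
            if {q' | ∃ q ∈ (NP n).1.2,
                q' ∈ (σN.f1 (NP n).2 (NP n).1 (w n)).2.val.2 q ∧ (q, w n, q') ∉ F} = ∅
              then (NP (n+1)).1.1
              else {q' | ∃ q ∈ (NP n).1.2,
                q' ∈ (σN.f1 (NP n).2 (NP n).1 (w n)).2.val.2 q ∧ (q, w n, q') ∉ F}
          rw [hd]
          show (if {q' | ∃ q ∈ (σN.f1 (NP n).2 (NP n).1 (w n)).1.2,
              q' ∈ (σN.f1 (NP n).2 (NP n).1 (w n)).2.val.2 q ∧
                (q, (σN.f1 (NP n).2 (NP n).1 (w n)).2.val.1, q') ∉ F} = ∅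
            then {q' | ∃ q ∈ (σN.f1 (NP n).2 (NP n).1 (w n)).1.1,
              q' ∈ (σN.f1 (NP n).2 (NP n).1 (w n)).2.val.2 q}
            else {q' | ∃ q ∈ (σN.f1 (NP n).2 (NP n).1 (w n)).1.2,
              q' ∈ (σN.f1 (NP n).2 (NP n).1 (w n)).2.val.2 q ∧
                (q, (σN.f1 (NP n).2 (NP n).1 (w n)).2.val.1, q') ∉ F}) = _
          rw [(hsrc n).1, (hsrc n).2]
          have hd1 : ((breakpointNBW M F).dst (σN.f1 (NP n).2 (NP n).1 (w n))).1 =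
              {q' | ∃ q ∈ (NP n).1.1, q' ∈ (σN.f1 (NP n).2 (NP n).1 (w n)).2.val.2 q} := by
            show {q' | ∃ q ∈ (σN.f1 (NP n).2 (NP n).1 (w n)).1.1,
                q' ∈ (σN.f1 (NP n).2 (NP n).1 (w n)).2.val.2 q} = _
            rw [(hsrc n).1]
          rw [hd1]
        · show qs 0 ∈ (NP 0).1.1
          rw [hq0, hNP0]
          rfl
        · have hprioeq : (fun n => (breakpointNBW M F).prio ((ρN n).e1)) = fun n =>
              if {q' | ∃ p ∈ (NP n).1.2,
                  q' ∈ (σN.f1 (NP n).2 (NP n).1 (w n)).2.val.2 p ∧ (p, w n, q') ∉ F} = ∅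
                then 2 else 1 := by
            funext n
            show (if {q' | ∃ q ∈ (σN.f1 (NP n).2 (NP n).1 (w n)).1.2,
                q' ∈ (σN.f1 (NP n).2 (NP n).1 (w n)).2.val.2 q ∧
                  (q, (σN.f1 (NP n).2 (NP n).1 (w n)).2.val.1, q') ∉ F} = ∅
              then 2 else 1) = _
            rw [(hsrc n).1, (hsrc n).2]
          have h12 : ∀ m, (breakpointNBW M F).prio ((ρN m).e1) = 1 ∨
              (breakpointNBW M F).prio ((ρN m).e1) = 2 := by
            intro m
            show (if _ = ∅ then 2 else 1) = 1 ∨ (if _ = ∅ then 2 else 1) = 2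
            split
            · right; rfl
            · left; rfl
          have := (parity12 h12).mp hpar
          rwa [hprioeq] at this
    · left
      intro hwM
      exact hL (mh_complete M hF w hwM)

end DIR2

end BreakpointProof

theorem existsGFG_iff_breakpoint_GFG
    (Alph : Type) (M : AltAut Alph) [Finite Alph] [Finite M.Q]
    (F : Set (M.Q × Alph × M.Q)) (hF : M.IsBuchi F) :
    M.ExistsGFG ↔ (breakpointNBW M F).GFG :=
  ⟨fun h => BreakpointProof.dir1 M F hF h, fun h => BreakpointProof.dir2 M F hF h⟩
end

section
/- Let A be a nondeterministic coBüchi automaton such that Eve wins G₂(A), and let A' be the G₂-restriction of A, i.e., the automaton obtained by restricting A to the set Q' of states q such that Eve wins G₂(A^q), where A^q is A with initial state changed to q. Then: (i) Eve wins G₂(A'^{q'}) for every state q' of A', and (ii) if A' is GFG then A is GFG. -/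
set_option autoImplicit false
set_option linter.unusedVariables false

/-! ### Nondeterministic coBüchi automata -/

/-- A nondeterministic coBüchi automaton: `acc q a q'` holds iff the transition
`(q, a, q')` is accepting; a run is accepting iff it eventually takes only
accepting transitions. -/
structure NCW (A : Type) where
  Q : Type
  init : Q
  delta : Q → A → Set Q
  acc : Q → A → Q → Prop

namespace NCW

variable {A : Type}

/-- `r` is a run of `C` on `w` from the state `q₀`. -/
def RunOn (C : NCW A) (q₀ : C.Q) (w : ℕ → A) (r : ℕ → C.Q) : Prop :=
  r 0 = q₀ ∧ ∀ n, r (n+1) ∈ C.delta (r n) (w n)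

/-- The run `r` on `w` is accepting: eventually only accepting transitions. -/
def AccRun (C : NCW A) (w : ℕ → A) (r : ℕ → C.Q) : Prop :=
  ∃ N, ∀ n, N ≤ n → C.acc (r n) (w n) (r (n+1))

/-- The language of `C` from the state `q₀`. -/
def LangFrom (C : NCW A) (q₀ : C.Q) : Set (ℕ → A) :=
  {w | ∃ r, C.RunOn q₀ w r ∧ C.AccRun w r}

/-- The language of `C`. -/
def Lang (C : NCW A) : Set (ℕ → A) := C.LangFrom C.init

/-- The letter game on `C`: Adam picks letters, Eve picks transitions; Eve wins
iff the word played is not in `L(C)` or her run is accepting. -/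
def letterGame (C : NCW A) : Game C.Q A C.Q Unit Unit Unit Unit where
  init := C.init
  A1 _ := Set.univ
  E1 q a := C.delta q a
  A2 _ _ _ := Set.univ
  E2 _ _ _ _ := Set.univ
  A3 _ _ _ _ _ := Set.univ
  E3 _ _ _ _ _ _ := Set.univ
  next _ _ q' _ _ _ _ := q'
  win ρ := (fun n => (ρ n).a1) ∉ C.Lang ∨
           ∃ N, ∀ n, N ≤ n → C.acc (ρ n).st (ρ n).a1 (ρ n).e1

/-- `C` is good-for-games. -/
def GFG (C : NCW A) : Prop := Game.EveWins C.letterGame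

/-- The two-token game on `C` from the configuration `(p, q₁, q₂)`: Adam picks
a letter, Eve picks a transition for her token, Adam picks transitions for his
two tokens; Eve wins iff her run is accepting or both of Adam's runs are
rejecting. -/
def G2From (C : NCW A) (p q₁ q₂ : C.Q) :
    Game (C.Q × C.Q × C.Q) A C.Q (C.Q × C.Q) Unit Unit Unit where
  init := (p, q₁, q₂)
  A1 _ := Set.univ
  E1 c a := C.delta c.1 a
  A2 c a _ := {m | m.1 ∈ C.delta c.2.1 a ∧ m.2 ∈ C.delta c.2.2 a}
  E2 _ _ _ _ := Set.univ
  A3 _ _ _ _ _ := Set.univ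
  E3 _ _ _ _ _ _ := Set.univ
  next _ _ q' m _ _ _ := (q', m.1, m.2)
  win ρ :=
    (∃ N, ∀ n, N ≤ n → C.acc (ρ n).st.1 (ρ n).a1 (ρ n).e1) ∨
    ((¬ ∃ N, ∀ n, N ≤ n → C.acc (ρ n).st.2.1 (ρ n).a1 (ρ n).a2.1) ∧
     (¬ ∃ N, ∀ n, N ≤ n → C.acc (ρ n).st.2.2 (ρ n).a1 (ρ n).a2.2))

/-- The two-token game `G₂(C)` (from the initial state). -/
def G2 (C : NCW A) : Game (C.Q × C.Q × C.Q) A C.Q (C.Q × C.Q) Unit Unit Unit :=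
  C.G2From C.init C.init C.init

end NCW

/-! ### Statement 19

Let `A` be a nondeterministic coBüchi automaton such that Eve wins `G₂(A)`,
and let `A'` be the `G₂`-restriction of `A`, obtained by restricting `A` to
the states `q` such that Eve wins `G₂(A^q)`.  Then (i) Eve wins `G₂(A'^{q'})`
for every state `q'` of `A'`, and (ii) if `A'` is GFG then `A` is GFG. -/

/-- The `G₂`-restriction of `C`: restrict to those states `q` from which Eve
wins the two-token game started with all three tokens on `q`. -/
def NCW.restrict {A : Type} (C : NCW A) (h : Game.EveWins (C.G2From C.init C.init C.init)) :
    NCW A where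
  Q := {q : C.Q // Game.EveWins (C.G2From q q q)}
  init := ⟨C.init, h⟩
  delta q a := {q' | q'.val ∈ C.delta q.val a}
  acc q a q' := C.acc q.val a q'.val

/-! ### Machinery for Statement 19 -/

namespace Stmt19

open Game

variable {A : Type}

/-- A (infinite) word. -/
abbrev Word (A : Type) := ℕ → A

/-- coBüchi acceptance of a state sequence along a word. -/
def Acc (D : NCW A) (w : Word A) (r : ℕ → D.Q) : Prop :=
  ∃ N, ∀ n, N ≤ n → D.acc (r n) (w n) (r (n+1))

/-- The first `n` steps of `r` are legal. -/
def PrefLegal (D : NCW A) (w : Word A) (r : ℕ → D.Q) (n : ℕ) : Prop :=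
  ∀ m, m < n → r (m+1) ∈ D.delta (r m) (w m)

/-- All steps of `r` are legal. -/
def Legal (D : NCW A) (w : Word A) (r : ℕ → D.Q) : Prop :=
  ∀ m, r (m+1) ∈ D.delta (r m) (w m)

theorem PrefLegal.mono {D : NCW A} {w r} {m n : ℕ} (h : PrefLegal D w r n) (hmn : m ≤ n) :
    PrefLegal D w r m := fun k hk => h k (lt_of_lt_of_le hk hmn)

theorem Legal.prefLegal {D : NCW A} {w r} (h : Legal D w r) (n : ℕ) : PrefLegal D w r n :=
  fun k _ => h k

/-- Gluing a suffix onto the first `n` values of `f`. -/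
def glue {X : Type*} (n : ℕ) (f g : ℕ → X) : ℕ → X :=
  fun m => if m < n then f m else g (m - n)

theorem glue_lt {X : Type*} {n : ℕ} (f g : ℕ → X) {m : ℕ} (h : m < n) : glue n f g m = f m := by
  simp [glue, h]

theorem glue_add {X : Type*} (n : ℕ) (f g : ℕ → X) (t : ℕ) : glue n f g (n + t) = g t := by
  simp [glue, Nat.add_sub_cancel_left]

theorem glue_ge {X : Type*} {n : ℕ} (f g : ℕ → X) {m : ℕ} (h : n ≤ m) :
    glue n f g m = g (m - n) := by
  simp [glue, Nat.not_lt.2 h]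

theorem acc_shift {D : NCW A} (w : Word A) (r : ℕ → D.Q) (n : ℕ) :
    Acc D (fun t => w (n + t)) (fun t => r (n + t)) ↔ Acc D w r := by
  constructor
  · rintro ⟨N, hN⟩
    refine ⟨n + N, fun m hm => ?_⟩
    have h1 : N ≤ m - n := by omega
    have := hN (m - n) h1
    simp only at this
    have e1 : n + (m - n) = m := by omega
    have e2 : n + (m - n + 1) = m + 1 := by omega
    rw [e1, e2] at this
    exact this
  · rintro ⟨N, hN⟩
    exact ⟨N, fun t ht => hN (n + t) (by omega)⟩

theorem acc_glue_shift {D : NCW A} (n : ℕ) (w w' : Word A) (r r' : ℕ → D.Q) :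
    Acc D (glue n w w') (glue n r r') ↔
      Acc D (fun t => glue n w w' (n + t)) (fun t => glue n r r' (n + t)) :=
  (acc_shift _ _ n).symm

theorem PrefLegal_glue {D : NCW A} {w w' : Word A} {x y : ℕ → D.Q} {n t : ℕ}
    (hx : PrefLegal D w x n) (h0 : y 0 = x n) (hy : PrefLegal D w' y t) :
    PrefLegal D (glue n w w') (glue n x y) (n + t) := by
  intro m hm
  rcases lt_trichotomy (m+1) n with h | h | h
  · rw [glue_lt _ _ h, glue_lt _ _ (by omega : m < n), glue_lt _ _ (by omega : m < n)]
    exact hx m (by omega)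
  · rw [glue_ge _ _ (le_of_eq h.symm), glue_lt _ _ (by omega : m < n),
      glue_lt _ _ (by omega : m < n)]
    have : m + 1 - n = 0 := by omega
    rw [this, h0, ← h]
    exact hx m (by omega)
  · have hn : n ≤ m := by omega
    rw [glue_ge _ _ (by omega : n ≤ m + 1), glue_ge _ _ hn, glue_ge (n := n) w w' hn]
    have : m + 1 - n = (m - n) + 1 := by omega
    rw [this]
    exact hy (m - n) (by omega)

theorem Legal_glue {D : NCW A} {w w' : Word A} {x y : ℕ → D.Q} {n : ℕ}
    (hx : PrefLegal D w x n) (h0 : y 0 = x n) (hy : Legal D w' y) :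
    Legal D (glue n w w') (glue n x y) := by
  intro m
  have := PrefLegal_glue hx h0 (hy.prefLegal (m+1)) m (by omega)
  exact this

/-- A causal function realizing a winning strategy of Eve in the two-token game
`G2From p q1 q2`: given the word and Adam's two token runs, it produces Eve's
run, in a causal way (the value at time `n+1` depends only on the inputs up to
time `n`). -/
structure CW2 (D : NCW A) (p q1 q2 : D.Q) where
  F : Word A → (ℕ → D.Q) → (ℕ → D.Q) → (ℕ → D.Q)
  causal : ∀ (n : ℕ) (w w' : Word A) (r1 r1' r2 r2' : ℕ → D.Q),
    (∀ m, m ≤ n → w m = w' m) → (∀ m, m ≤ n → r1 m = r1' m) → (∀ m, m ≤ n → r2 m = r2' m) →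
    F w r1 r2 (n+1) = F w' r1' r2' (n+1)
  base : ∀ w r1 r2, F w r1 r2 0 = p
  legal : ∀ (w : Word A) (r1 r2 : ℕ → D.Q) (n : ℕ), r1 0 = q1 → r2 0 = q2 →
    PrefLegal D w r1 n → PrefLegal D w r2 n →
    F w r1 r2 (n+1) ∈ D.delta (F w r1 r2 n) (w n)
  wins : ∀ (w : Word A) (r1 r2 : ℕ → D.Q), r1 0 = q1 → r2 0 = q2 →
    Legal D w r1 → Legal D w r2 →
    Acc D w (F w r1 r2) ∨ (¬ Acc D w r1 ∧ ¬ Acc D w r2)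

/-- A causal function realizing a winning strategy of Eve in a four-token game
where the first two of Adam's tokens start on Eve's position `p` and the last
two on `y1`, `y2`. -/
structure CW4 (D : NCW A) (p y1 y2 : D.Q) where
  F : Word A → (ℕ → D.Q) → (ℕ → D.Q) → (ℕ → D.Q) → (ℕ → D.Q) → (ℕ → D.Q)
  causal : ∀ (n : ℕ) (w w' : Word A) (r1 r1' r2 r2' r3 r3' r4 r4' : ℕ → D.Q),
    (∀ m, m ≤ n → w m = w' m) → (∀ m, m ≤ n → r1 m = r1' m) → (∀ m, m ≤ n → r2 m = r2' m) →
    (∀ m, m ≤ n → r3 m = r3' m) → (∀ m, m ≤ n → r4 m = r4' m) →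
    F w r1 r2 r3 r4 (n+1) = F w' r1' r2' r3' r4' (n+1)
  base : ∀ w r1 r2 r3 r4, F w r1 r2 r3 r4 0 = p
  legal : ∀ (w : Word A) (r1 r2 r3 r4 : ℕ → D.Q) (n : ℕ),
    r1 0 = p → r2 0 = p → r3 0 = y1 → r4 0 = y2 →
    PrefLegal D w r1 n → PrefLegal D w r2 n → PrefLegal D w r3 n → PrefLegal D w r4 n →
    F w r1 r2 r3 r4 (n+1) ∈ D.delta (F w r1 r2 r3 r4 n) (w n)
  wins : ∀ (w : Word A) (r1 r2 r3 r4 : ℕ → D.Q),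
    r1 0 = p → r2 0 = p → r3 0 = y1 → r4 0 = y2 →
    Legal D w r1 → Legal D w r2 → Legal D w r3 → Legal D w r4 →
    Acc D w (F w r1 r2 r3 r4) ∨
      (¬ Acc D w r1 ∧ ¬ Acc D w r2 ∧ ¬ Acc D w r3 ∧ ¬ Acc D w r4)

/-- A causal family of everywhere-legal runs from `q` (one for each word). -/
structure Imm (D : NCW A) (q : D.Q) where
  xi : Word A → ℕ → D.Q
  causal : ∀ (n : ℕ) (w w' : Word A), (∀ m, m < n → w m = w' m) → xi w n = xi w' n
  base : ∀ w, xi w 0 = q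
  legal : ∀ w, Legal D w (xi w)

/-- A causal function realizing a winning strategy of Eve in the letter game. -/
structure LG (D : NCW A) where
  H : Word A → ℕ → D.Q
  causal : ∀ (n : ℕ) (w w' : Word A), (∀ m, m ≤ n → w m = w' m) → H w (n+1) = H w' (n+1)
  base : ∀ w, H w 0 = D.init
  legal : ∀ (w : Word A) (n : ℕ), H w (n+1) ∈ D.delta (H w n) (w n)
  wins : ∀ w, w ∈ D.Lang → Acc D w (H w)

/-- Outputs of a `CW2` agree (up to `n`) on inputs agreeing up to `n`. -/
theorem CW2.agree {D : NCW A} {p q1 q2 : D.Q} (Φ : CW2 D p q1 q2)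
    {n : ℕ} {w w' : Word A} {r1 r1' r2 r2' : ℕ → D.Q}
    (hw : ∀ m, m ≤ n → w m = w' m) (h1 : ∀ m, m ≤ n → r1 m = r1' m)
    (h2 : ∀ m, m ≤ n → r2 m = r2' m) :
    ∀ m, m ≤ n + 1 → Φ.F w r1 r2 m = Φ.F w' r1' r2' m := by
  intro m hm
  match m with
  | 0 => rw [Φ.base, Φ.base]
  | (k+1) =>
    exact Φ.causal k w w' r1 r1' r2 r2' (fun j hj => hw j (by omega))
      (fun j hj => h1 j (by omega)) (fun j hj => h2 j (by omega))

theorem CW4.agree {D : NCW A} {p y1 y2 : D.Q} (G : CW4 D p y1 y2)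
    {n : ℕ} {w w' : Word A} {r1 r1' r2 r2' r3 r3' r4 r4' : ℕ → D.Q}
    (hw : ∀ m, m ≤ n → w m = w' m) (h1 : ∀ m, m ≤ n → r1 m = r1' m)
    (h2 : ∀ m, m ≤ n → r2 m = r2' m) (h3 : ∀ m, m ≤ n → r3 m = r3' m)
    (h4 : ∀ m, m ≤ n → r4 m = r4' m) :
    ∀ m, m ≤ n + 1 → G.F w r1 r2 r3 r4 m = G.F w' r1' r2' r3' r4' m := by
  intro m hm
  match m with
  | 0 => rw [G.base, G.base]
  | (k+1) =>
    exact G.causal k w w' r1 r1' r2 r2' r3 r3' r4 r4' (fun j hj => hw j (by omega))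
      (fun j hj => h1 j (by omega)) (fun j hj => h2 j (by omega))
      (fun j hj => h3 j (by omega)) (fun j hj => h4 j (by omega))

theorem glue_agree {X : Type*} (n t : ℕ) (f : ℕ → X) {g g' : ℕ → X}
    (h : ∀ m, m ≤ t → g m = g' m) :
    ∀ m, m ≤ n + t → glue n f g m = glue n f g' m := by
  intro m hm
  by_cases hc : m < n
  · rw [glue_lt _ _ hc, glue_lt _ _ hc]
  · rw [glue_ge _ _ (by omega), glue_ge _ _ (by omega)]
    exact h _ (by omega)

/-! ### Self-feeding a CW2 (copycat on both of Adam's tokens) -/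

noncomputable def CW2.sf {D : NCW A} {p : D.Q} (Φ : CW2 D p p p) (w : Word A) : ℕ → D.Q
  | 0 => p
  | (n+1) =>
    Φ.F w (fun m => if h : m ≤ n then Φ.sf w m else p)
          (fun m => if h : m ≤ n then Φ.sf w m else p) (n+1)
  termination_by n => n
  decreasing_by all_goals omega

theorem CW2.sf_base {D : NCW A} {p : D.Q} (Φ : CW2 D p p p) (w : Word A) :
    Φ.sf w 0 = p := by rw [CW2.sf]

theorem CW2.sf_succ {D : NCW A} {p : D.Q} (Φ : CW2 D p p p) (w : Word A) (n : ℕ) :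
    Φ.sf w (n+1) = Φ.F w (Φ.sf w) (Φ.sf w) (n+1) := by
  rw [CW2.sf]
  exact Φ.causal n w w _ (Φ.sf w) _ (Φ.sf w) (fun m _ => rfl)
    (fun m hm => by simp [hm]) (fun m hm => by simp [hm])

theorem CW2.sf_eq {D : NCW A} {p : D.Q} (Φ : CW2 D p p p) (w : Word A) (n : ℕ) :
    Φ.sf w n = Φ.F w (Φ.sf w) (Φ.sf w) n := by
  match n with
  | 0 => rw [Φ.sf_base, Φ.base]
  | (n+1) => exact Φ.sf_succ w n

theorem CW2.sf_legal {D : NCW A} {p : D.Q} (Φ : CW2 D p p p) (w : Word A) :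
    Legal D w (Φ.sf w) := by
  intro n
  induction n using Nat.strong_induction_on with
  | _ n ih =>
    have hpl : PrefLegal D w (Φ.sf w) n := fun m hm => ih m hm
    have := Φ.legal w (Φ.sf w) (Φ.sf w) n (Φ.sf_base w) (Φ.sf_base w) hpl hpl
    rw [← Φ.sf_eq, ← Φ.sf_eq] at this
    exact this

theorem CW2.sf_causal {D : NCW A} {p : D.Q} (Φ : CW2 D p p p) (w w' : Word A) :
    ∀ n, (∀ m, m < n → w m = w' m) → Φ.sf w n = Φ.sf w' n := by
  intro n
  induction n using Nat.strong_induction_on with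
  | _ n ih =>
    intro hw
    match n with
    | 0 => rw [Φ.sf_base, Φ.sf_base]
    | (k+1) =>
      rw [Φ.sf_succ, Φ.sf_succ]
      exact Φ.causal k w w' _ _ _ _ (fun m hm => hw m (by omega))
        (fun m hm => ih m (by omega) (fun j hj => hw j (by omega)))
        (fun m hm => ih m (by omega) (fun j hj => hw j (by omega)))

/-- The everywhere-legal causal family of runs obtained by self-feeding. -/
noncomputable def CW2.imm {D : NCW A} {p : D.Q} (Φ : CW2 D p p p) : Imm D p where
  xi := Φ.sf
  causal := fun n w w' hw => Φ.sf_causal w w' n hw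
  base := Φ.sf_base
  legal := Φ.sf_legal

/-- Residual of a self-fed CW2 at time `n`: a CW2 at the triple of the current
position of the self-fed run. -/
noncomputable def CW2.sfResidual {D : NCW A} {p : D.Q} (Φ : CW2 D p p p) (w : Word A)
    (n : ℕ) : CW2 D (Φ.sf w n) (Φ.sf w n) (Φ.sf w n) where
  F w' s1 s2 := fun t => Φ.F (glue n w w') (glue n (Φ.sf w) s1) (glue n (Φ.sf w) s2) (n+t)
  causal := by
    intro t w' w'' s1 s1' s2 s2' hw h1 h2
    show Φ.F _ _ _ (n + (t+1)) = Φ.F _ _ _ (n + (t+1))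
    have hnt : n + (t + 1) = (n + t) + 1 := by omega
    rw [hnt]
    exact Φ.causal (n+t) _ _ _ _ _ _
      (glue_agree n t w hw) (glue_agree n t (Φ.sf w) h1) (glue_agree n t (Φ.sf w) h2)
  base := by
    intro w' s1 s2
    show Φ.F _ _ _ (n + 0) = Φ.sf w n
    rw [Nat.add_zero, Φ.sf_eq w n]
    match n with
    | 0 => rw [Φ.base, Φ.base]
    | (k+1) =>
      refine Φ.agree (n := k) ?_ ?_ ?_ (k+1) (le_refl _) <;>
        exact fun m hm => glue_lt _ _ (by omega)
  legal := by
    intro w' s1 s2 t h1 h2 hl1 hl2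
    show Φ.F _ _ _ (n + (t+1)) ∈ D.delta (Φ.F _ _ _ (n + t)) (w' t)
    have hnt : n + (t + 1) = (n + t) + 1 := by omega
    rw [hnt]
    have hword : w' t = glue n w w' (n + t) := (glue_add n w w' t).symm
    rw [hword]
    have hpl1 : PrefLegal D (glue n w w') (glue n (Φ.sf w) s1) (n + t) :=
      PrefLegal_glue ((Φ.sf_legal w).prefLegal n) h1 hl1
    have hpl2 : PrefLegal D (glue n w w') (glue n (Φ.sf w) s2) (n + t) :=
      PrefLegal_glue ((Φ.sf_legal w).prefLegal n) h2 hl2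
    refine Φ.legal _ _ _ (n+t) ?_ ?_ hpl1 hpl2
    · match n with
      | 0 => rw [glue_ge _ _ (le_refl 0)]; rw [h1, Φ.sf_base]
      | (k+1) => rw [glue_lt _ _ (by omega)]; exact Φ.sf_base w
    · match n with
      | 0 => rw [glue_ge _ _ (le_refl 0)]; rw [h2, Φ.sf_base]
      | (k+1) => rw [glue_lt _ _ (by omega)]; exact Φ.sf_base w
  wins := by
    intro w' s1 s2 h1 h2 hl1 hl2
    have hL1 : Legal D (glue n w w') (glue n (Φ.sf w) s1) :=
      Legal_glue ((Φ.sf_legal w).prefLegal n) h1 hl1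
    have hL2 : Legal D (glue n w w') (glue n (Φ.sf w) s2) :=
      Legal_glue ((Φ.sf_legal w).prefLegal n) h2 hl2
    have hb1 : glue n (Φ.sf w) s1 0 = p := by
      match n with
      | 0 => rw [glue_ge _ _ (le_refl 0)]; rw [h1, Φ.sf_base]
      | (k+1) => rw [glue_lt _ _ (by omega)]; exact Φ.sf_base w
    have hb2 : glue n (Φ.sf w) s2 0 = p := by
      match n with
      | 0 => rw [glue_ge _ _ (le_refl 0)]; rw [h2, Φ.sf_base]
      | (k+1) => rw [glue_lt _ _ (by omega)]; exact Φ.sf_base w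
    have := Φ.wins (glue n w w') (glue n (Φ.sf w) s1) (glue n (Φ.sf w) s2) hb1 hb2 hL1 hL2
    have hsh : ∀ g : ℕ → D.Q, (fun t => glue n (Φ.sf w) g (n+t)) = g := by
      intro g; funext t; exact glue_add _ _ _ _
    have hshw : (fun t => glue n w w' (n+t)) = w' := by
      funext t; exact glue_add _ _ _ _
    rcases this with hacc | ⟨hr1, hr2⟩
    · left
      have := ((acc_shift (D := D) (glue n w w') (Φ.F (glue n w w') (glue n (Φ.sf w) s1) (glue n (Φ.sf w) s2)) n).2 hacc)
      rw [hshw] at this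
      exact this
    · right
      constructor
      · intro hc
        apply hr1
        have : Acc D (fun t => glue n w w' (n+t)) (fun t => glue n (Φ.sf w) s1 (n+t)) := by
          rw [hshw, hsh]; exact hc
        exact (acc_shift _ _ n).1 this
      · intro hc
        apply hr2
        have : Acc D (fun t => glue n w w' (n+t)) (fun t => glue n (Φ.sf w) s2 (n+t)) := by
          rw [hshw, hsh]; exact hc
        exact (acc_shift _ _ n).1 this

/-! ### Self-feeding a CW4 on its first two slots, with two carrier runs -/

noncomputable def CW4.sf {D : NCW A} {p y1 y2 : D.Q} (G : CW4 D p y1 y2) (w : Word A)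
    (c1 c2 : ℕ → D.Q) : ℕ → D.Q
  | 0 => p
  | (n+1) =>
    G.F w (fun m => if h : m ≤ n then G.sf w c1 c2 m else p)
          (fun m => if h : m ≤ n then G.sf w c1 c2 m else p) c1 c2 (n+1)
  termination_by n => n
  decreasing_by all_goals omega

theorem CW4.sf_base {D : NCW A} {p y1 y2 : D.Q} (G : CW4 D p y1 y2) (w : Word A)
    (c1 c2 : ℕ → D.Q) : G.sf w c1 c2 0 = p := by rw [CW4.sf]

theorem CW4.sf_succ {D : NCW A} {p y1 y2 : D.Q} (G : CW4 D p y1 y2) (w : Word A)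
    (c1 c2 : ℕ → D.Q) (n : ℕ) :
    G.sf w c1 c2 (n+1) = G.F w (G.sf w c1 c2) (G.sf w c1 c2) c1 c2 (n+1) := by
  rw [CW4.sf]
  exact G.causal n w w _ (G.sf w c1 c2) _ (G.sf w c1 c2) c1 c1 c2 c2 (fun m _ => rfl)
    (fun m hm => by simp [hm]) (fun m hm => by simp [hm]) (fun m _ => rfl) (fun m _ => rfl)

theorem CW4.sf_eq {D : NCW A} {p y1 y2 : D.Q} (G : CW4 D p y1 y2) (w : Word A)
    (c1 c2 : ℕ → D.Q) (n : ℕ) :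
    G.sf w c1 c2 n = G.F w (G.sf w c1 c2) (G.sf w c1 c2) c1 c2 n := by
  match n with
  | 0 => rw [G.sf_base, G.base]
  | (n+1) => exact G.sf_succ w c1 c2 n

theorem CW4.sf_legal {D : NCW A} {p y1 y2 : D.Q} (G : CW4 D p y1 y2) {w : Word A}
    {c1 c2 : ℕ → D.Q} (h1 : c1 0 = y1) (h2 : c2 0 = y2) :
    ∀ n, PrefLegal D w c1 n → PrefLegal D w c2 n →
      G.sf w c1 c2 (n+1) ∈ D.delta (G.sf w c1 c2 n) (w n) := by
  intro n
  induction n using Nat.strong_induction_on with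
  | _ n ih =>
    intro hc1 hc2
    have hpl : PrefLegal D w (G.sf w c1 c2) n := fun m hm =>
      ih m hm (hc1.mono (by omega)) (hc2.mono (by omega))
    have := G.legal w (G.sf w c1 c2) (G.sf w c1 c2) c1 c2 n
      (G.sf_base w c1 c2) (G.sf_base w c1 c2) h1 h2 hpl hpl hc1 hc2
    rw [← G.sf_eq, ← G.sf_eq] at this
    exact this

theorem CW4.sf_prefLegal {D : NCW A} {p y1 y2 : D.Q} (G : CW4 D p y1 y2) {w : Word A}
    {c1 c2 : ℕ → D.Q} (h1 : c1 0 = y1) (h2 : c2 0 = y2) {n : ℕ}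
    (hc1 : PrefLegal D w c1 n) (hc2 : PrefLegal D w c2 n) :
    PrefLegal D w (G.sf w c1 c2) n :=
  fun m hm => G.sf_legal h1 h2 m (hc1.mono (by omega)) (hc2.mono (by omega))

theorem CW4.sf_Legal {D : NCW A} {p y1 y2 : D.Q} (G : CW4 D p y1 y2) {w : Word A}
    {c1 c2 : ℕ → D.Q} (h1 : c1 0 = y1) (h2 : c2 0 = y2)
    (hc1 : Legal D w c1) (hc2 : Legal D w c2) : Legal D w (G.sf w c1 c2) :=
  fun m => G.sf_legal h1 h2 m (hc1.prefLegal m) (hc2.prefLegal m)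

theorem CW4.sf_causal {D : NCW A} {p y1 y2 : D.Q} (G : CW4 D p y1 y2) (w w' : Word A)
    (c1 c1' c2 c2' : ℕ → D.Q) :
    ∀ n, (∀ m, m < n → w m = w' m) → (∀ m, m < n → c1 m = c1' m) →
      (∀ m, m < n → c2 m = c2' m) → G.sf w c1 c2 n = G.sf w' c1' c2' n := by
  intro n
  induction n using Nat.strong_induction_on with
  | _ n ih =>
    intro hw hc1 hc2
    match n with
    | 0 => rw [G.sf_base, G.sf_base]
    | (k+1) =>
      rw [G.sf_succ, G.sf_succ]
      exact G.causal k w w' _ _ _ _ _ _ _ _ (fun m hm => hw m (by omega))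
        (fun m hm => ih m (by omega) (fun j hj => hw j (by omega))
          (fun j hj => hc1 j (by omega)) (fun j hj => hc2 j (by omega)))
        (fun m hm => ih m (by omega) (fun j hj => hw j (by omega))
          (fun j hj => hc1 j (by omega)) (fun j hj => hc2 j (by omega)))
        (fun m hm => hc1 m (by omega)) (fun m hm => hc2 m (by omega))

theorem CW4.sf_wins {D : NCW A} {p y1 y2 : D.Q} (G : CW4 D p y1 y2) {w : Word A}
    {c1 c2 : ℕ → D.Q} (h1 : c1 0 = y1) (h2 : c2 0 = y2)
    (hc1 : Legal D w c1) (hc2 : Legal D w c2) :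
    Acc D w (G.sf w c1 c2) ∨ (¬ Acc D w c1 ∧ ¬ Acc D w c2) := by
  have hsl : Legal D w (G.sf w c1 c2) := G.sf_Legal h1 h2 hc1 hc2
  have := G.wins w (G.sf w c1 c2) (G.sf w c1 c2) c1 c2
    (G.sf_base w c1 c2) (G.sf_base w c1 c2) h1 h2 hsl hsl hc1 hc2
  have he : G.F w (G.sf w c1 c2) (G.sf w c1 c2) c1 c2 = G.sf w c1 c2 := by
    funext n; exact (G.sf_eq w c1 c2 n).symm
  rw [he] at this
  rcases this with hacc | ⟨_, _, hr3, hr4⟩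
  · exact Or.inl hacc
  · exact Or.inr ⟨hr3, hr4⟩

/-- Residual of a carrier-self-fed CW4 at time `n`. -/
noncomputable def CW4.sfResidual {D : NCW A} {p y1 y2 : D.Q} (G : CW4 D p y1 y2)
    (w : Word A) {c1 c2 : ℕ → D.Q} (h1 : c1 0 = y1) (h2 : c2 0 = y2) (n : ℕ)
    (hc1 : PrefLegal D w c1 n) (hc2 : PrefLegal D w c2 n) :
    CW4 D (G.sf w c1 c2 n) (c1 n) (c2 n) where
  F w' s1 s2 s3 s4 := fun t =>
    G.F (glue n w w') (glue n (G.sf w c1 c2) s1) (glue n (G.sf w c1 c2) s2)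
      (glue n c1 s3) (glue n c2 s4) (n+t)
  causal := by
    intro t w' w'' s1 s1' s2 s2' s3 s3' s4 s4' hw hs1 hs2 hs3 hs4
    show G.F _ _ _ _ _ (n + (t+1)) = G.F _ _ _ _ _ (n + (t+1))
    have hnt : n + (t + 1) = (n + t) + 1 := by omega
    rw [hnt]
    exact G.causal (n+t) _ _ _ _ _ _ _ _ _ _
      (glue_agree n t w hw) (glue_agree n t _ hs1) (glue_agree n t _ hs2)
      (glue_agree n t _ hs3) (glue_agree n t _ hs4)
  base := by
    intro w' s1 s2 s3 s4
    show G.F _ _ _ _ _ (n + 0) = G.sf w c1 c2 n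
    rw [Nat.add_zero, G.sf_eq w c1 c2 n]
    match n with
    | 0 => rw [G.base, G.base]
    | (k+1) =>
      refine G.agree (n := k) ?_ ?_ ?_ ?_ ?_ (k+1) (le_refl _) <;>
        exact fun m hm => glue_lt _ _ (by omega)
  legal := by
    intro w' s1 s2 s3 s4 t hb1 hb2 hb3 hb4 hl1 hl2 hl3 hl4
    show G.F _ _ _ _ _ (n + (t+1)) ∈ D.delta (G.F _ _ _ _ _ (n + t)) (w' t)
    have hnt : n + (t + 1) = (n + t) + 1 := by omega
    rw [hnt]
    have hword : w' t = glue n w w' (n + t) := (glue_add n w w' t).symm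
    rw [hword]
    have hsfpl : PrefLegal D w (G.sf w c1 c2) n := G.sf_prefLegal h1 h2 hc1 hc2
    have hanch : ∀ (g : ℕ → D.Q) (q0 : D.Q), g 0 = q0 → glue 0 (G.sf w c1 c2) g 0 = g 0 := by
      intro g q0 _; rw [glue_ge _ _ (le_refl 0)]
    refine G.legal _ _ _ _ _ (n+t) ?_ ?_ ?_ ?_
      (PrefLegal_glue hsfpl hb1 hl1) (PrefLegal_glue hsfpl hb2 hl2)
      (PrefLegal_glue hc1 hb3 hl3) (PrefLegal_glue hc2 hb4 hl4)
    · match n with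
      | 0 => rw [glue_ge _ _ (le_refl 0)]; rw [hb1, G.sf_base]
      | (k+1) => rw [glue_lt _ _ (by omega)]; exact G.sf_base w c1 c2
    · match n with
      | 0 => rw [glue_ge _ _ (le_refl 0)]; rw [hb2, G.sf_base]
      | (k+1) => rw [glue_lt _ _ (by omega)]; exact G.sf_base w c1 c2
    · match n with
      | 0 => rw [glue_ge _ _ (le_refl 0)]; rw [hb3]; rw [h1]
      | (k+1) => rw [glue_lt _ _ (by omega)]; exact h1
    · match n with
      | 0 => rw [glue_ge _ _ (le_refl 0)]; rw [hb4]; rw [h2]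
      | (k+1) => rw [glue_lt _ _ (by omega)]; exact h2
  wins := by
    intro w' s1 s2 s3 s4 hb1 hb2 hb3 hb4 hl1 hl2 hl3 hl4
    have hsfpl : PrefLegal D w (G.sf w c1 c2) n := G.sf_prefLegal h1 h2 hc1 hc2
    have hB1 : glue n (G.sf w c1 c2) s1 0 = p := by
      match n with
      | 0 => rw [glue_ge _ _ (le_refl 0)]; rw [hb1, G.sf_base]
      | (k+1) => rw [glue_lt _ _ (by omega)]; exact G.sf_base w c1 c2
    have hB2 : glue n (G.sf w c1 c2) s2 0 = p := by
      match n with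
      | 0 => rw [glue_ge _ _ (le_refl 0)]; rw [hb2, G.sf_base]
      | (k+1) => rw [glue_lt _ _ (by omega)]; exact G.sf_base w c1 c2
    have hB3 : glue n c1 s3 0 = y1 := by
      match n with
      | 0 => rw [glue_ge _ _ (le_refl 0)]; rw [hb3]; rw [h1]
      | (k+1) => rw [glue_lt _ _ (by omega)]; exact h1
    have hB4 : glue n c2 s4 0 = y2 := by
      match n with
      | 0 => rw [glue_ge _ _ (le_refl 0)]; rw [hb4]; rw [h2]
      | (k+1) => rw [glue_lt _ _ (by omega)]; exact h2
    have := G.wins (glue n w w') _ _ _ _ hB1 hB2 hB3 hB4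
      (Legal_glue hsfpl hb1 hl1) (Legal_glue hsfpl hb2 hl2)
      (Legal_glue hc1 hb3 hl3) (Legal_glue hc2 hb4 hl4)
    have hshw : (fun t => glue n w w' (n+t)) = w' := by
      funext t; exact glue_add _ _ _ _
    have hsh : ∀ g g' : ℕ → D.Q, (fun t => glue n g g' (n+t)) = g' := by
      intro g g'; funext t; exact glue_add _ _ _ _
    rcases this with hacc | ⟨hr1, hr2, hr3, hr4⟩
    · left
      have := (acc_shift (D := D) (glue n w w')
        (G.F (glue n w w') (glue n (G.sf w c1 c2) s1) (glue n (G.sf w c1 c2) s2)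
          (glue n c1 s3) (glue n c2 s4)) n).2 hacc
      rw [hshw] at this
      exact this
    · right
      refine ⟨?_, ?_, ?_, ?_⟩
      · intro hc; apply hr1
        have : Acc D (fun t => glue n w w' (n+t)) (fun t => glue n (G.sf w c1 c2) s1 (n+t)) := by
          rw [hshw, hsh]; exact hc
        exact (acc_shift _ _ n).1 this
      · intro hc; apply hr2
        have : Acc D (fun t => glue n w w' (n+t)) (fun t => glue n (G.sf w c1 c2) s2 (n+t)) := by
          rw [hshw, hsh]; exact hc
        exact (acc_shift _ _ n).1 this
      · intro hc; apply hr3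
        have : Acc D (fun t => glue n w w' (n+t)) (fun t => glue n c1 s3 (n+t)) := by
          rw [hshw, hsh]; exact hc
        exact (acc_shift _ _ n).1 this
      · intro hc; apply hr4
        have : Acc D (fun t => glue n w w' (n+t)) (fun t => glue n c2 s4 (n+t)) := by
          rw [hshw, hsh]; exact hc
        exact (acc_shift _ _ n).1 this

/-! ### Composing three CW2's into a CW4 -/

noncomputable def CW2.compose {D : NCW A} {q : D.Q} (Φa Φb Φc : CW2 D q q q) :
    CW4 D q q q where
  F w r1 r2 r3 r4 := Φa.F w (Φb.F w r1 r3) (Φc.F w r2 r4)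
  causal := by
    intro n w w' r1 r1' r2 r2' r3 r3' r4 r4' hw h1 h2 h3 h4
    exact Φa.causal n w w' _ _ _ _ hw
      (fun m hm => Φb.agree (n := n) hw h1 h3 m (by omega))
      (fun m hm => Φc.agree (n := n) hw h2 h4 m (by omega))
  base := fun w r1 r2 r3 r4 => Φa.base w _ _
  legal := by
    intro w r1 r2 r3 r4 n hb1 hb2 hb3 hb4 hl1 hl2 hl3 hl4
    refine Φa.legal w _ _ n (Φb.base w _ _) (Φc.base w _ _) ?_ ?_
    · intro m hm
      exact Φb.legal w r1 r3 m hb1 hb3 (hl1.mono (by omega)) (hl3.mono (by omega))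
    · intro m hm
      exact Φc.legal w r2 r4 m hb2 hb4 (hl2.mono (by omega)) (hl4.mono (by omega))
  wins := by
    intro w r1 r2 r3 r4 hb1 hb2 hb3 hb4 hl1 hl2 hl3 hl4
    have hLb : Legal D w (Φb.F w r1 r3) := fun m =>
      Φb.legal w r1 r3 m hb1 hb3 (hl1.prefLegal m) (hl3.prefLegal m)
    have hLc : Legal D w (Φc.F w r2 r4) := fun m =>
      Φc.legal w r2 r4 m hb2 hb4 (hl2.prefLegal m) (hl4.prefLegal m)
    rcases Φa.wins w _ _ (Φb.base w _ _) (Φc.base w _ _) hLb hLc with hacc | ⟨hnb, hnc⟩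
    · exact Or.inl hacc
    · rcases Φb.wins w r1 r3 hb1 hb3 hl1 hl3 with hacc | ⟨h1, h3⟩
      · exact absurd hacc hnb
      · rcases Φc.wins w r2 r4 hb2 hb4 hl2 hl4 with hacc | ⟨h2, h4⟩
        · exact absurd hacc hnc
        · exact Or.inr ⟨h1, h2, h3, h4⟩

/-! ### Key lemma: a CW4 whose two carrier slots admit immortal runs yields a CW2 -/

noncomputable def CW4.withImm {D : NCW A} {p y1 y2 : D.Q} (G : CW4 D p y1 y2)
    (I1 : Imm D y1) (I2 : Imm D y2) : CW2 D p p p where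
  F w s1 s2 := G.F w s1 s2 (I1.xi w) (I2.xi w)
  causal := by
    intro n w w' s1 s1' s2 s2' hw h1 h2
    exact G.causal n w w' _ _ _ _ _ _ _ _ hw h1 h2
      (fun m hm => I1.causal m w w' (fun j hj => hw j (by omega)))
      (fun m hm => I2.causal m w w' (fun j hj => hw j (by omega)))
  base := fun w s1 s2 => G.base w _ _ _ _
  legal := by
    intro w s1 s2 n hb1 hb2 hl1 hl2
    exact G.legal w s1 s2 _ _ n hb1 hb2 (I1.base w) (I2.base w) hl1 hl2
      ((I1.legal w).prefLegal n) ((I2.legal w).prefLegal n)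
  wins := by
    intro w s1 s2 hb1 hb2 hl1 hl2
    rcases G.wins w s1 s2 _ _ hb1 hb2 (I1.base w) (I2.base w) hl1 hl2
      (I1.legal w) (I2.legal w) with hacc | ⟨h1, h2, _, _⟩
    · exact Or.inl hacc
    · exact Or.inr ⟨h1, h2⟩

/-! ### The mutually self-sustaining system of runs along a cycle of CW4's -/

section Ysys

variable {D : NCW A} {ι : Type} (anchor : ι → D.Q) (c : ι → ι)
  (Ψ : ∀ i, CW4 D (anchor i) (anchor (c i)) (anchor (c i))) (w : Word A)

noncomputable def ysysAux : ℕ → ι → D.Q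
  | 0 => anchor
  | (n+1) => fun i =>
      (Ψ i).F w (fun m => if h : m ≤ n then ysysAux m i else anchor i)
                (fun m => if h : m ≤ n then ysysAux m i else anchor i)
                (fun m => if h : m ≤ n then ysysAux m (c i) else anchor (c i))
                (fun m => if h : m ≤ n then ysysAux m (c i) else anchor (c i)) (n+1)
  termination_by n => n
  decreasing_by all_goals omega

noncomputable def ysys (i : ι) : ℕ → D.Q := fun n => ysysAux anchor c Ψ w n i

theorem ysys_zero (i : ι) : ysys anchor c Ψ w i 0 = anchor i := by
  unfold ysys; rw [ysysAux]

theorem ysys_succ (i : ι) (n : ℕ) :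
    ysys anchor c Ψ w i (n+1) =
      (Ψ i).F w (ysys anchor c Ψ w i) (ysys anchor c Ψ w i)
        (ysys anchor c Ψ w (c i)) (ysys anchor c Ψ w (c i)) (n+1) := by
  show ysysAux anchor c Ψ w (n+1) i = _
  rw [ysysAux]
  exact (Ψ i).causal n w w _ _ _ _ _ _ _ _ (fun m _ => rfl)
    (fun m hm => by simp [hm]; rfl) (fun m hm => by simp [hm]; rfl)
    (fun m hm => by simp [hm]; rfl) (fun m hm => by simp [hm]; rfl)

theorem ysys_legal : ∀ (n : ℕ) (i : ι),
    ysys anchor c Ψ w i (n+1) ∈ D.delta (ysys anchor c Ψ w i n) (w n) := by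
  intro n
  induction n using Nat.strong_induction_on with
  | _ n ih =>
    intro i
    have hpl : ∀ j : ι, PrefLegal D w (ysys anchor c Ψ w j) n := fun j m hm => ih m hm j
    have := (Ψ i).legal w (ysys anchor c Ψ w i) (ysys anchor c Ψ w i)
      (ysys anchor c Ψ w (c i)) (ysys anchor c Ψ w (c i)) n
      (ysys_zero anchor c Ψ w i) (ysys_zero anchor c Ψ w i)
      (ysys_zero anchor c Ψ w (c i)) (ysys_zero anchor c Ψ w (c i))
      (hpl i) (hpl i) (hpl (c i)) (hpl (c i))
    rcases n with _ | k
    · rw [← ysys_succ] at this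
      rw [(Ψ i).base] at this
      rw [← ysys_zero anchor c Ψ w i] at this
      exact this
    · rw [← ysys_succ, ← ysys_succ] at this
      exact this

theorem ysys_Legal (i : ι) : Legal D w (ysys anchor c Ψ w i) :=
  fun n => ysys_legal anchor c Ψ w n i

end Ysys

theorem ysys_causal {D : NCW A} {ι : Type} (anchor : ι → D.Q) (c : ι → ι)
    (Ψ : ∀ i, CW4 D (anchor i) (anchor (c i)) (anchor (c i))) (w w' : Word A) :
    ∀ (n : ℕ), (∀ m, m < n → w m = w' m) → ∀ i,
      ysys anchor c Ψ w i n = ysys anchor c Ψ w' i n := by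
  intro n
  induction n using Nat.strong_induction_on with
  | _ n ih =>
    intro hw i
    match n with
    | 0 => rw [ysys_zero, ysys_zero]
    | (k+1) =>
      rw [ysys_succ, ysys_succ]
      exact (Ψ i).causal k w w' _ _ _ _ _ _ _ _ (fun m hm => hw m (by omega))
        (fun m hm => ih m (by omega) (fun j hj => hw j (by omega)) i)
        (fun m hm => ih m (by omega) (fun j hj => hw j (by omega)) i)
        (fun m hm => ih m (by omega) (fun j hj => hw j (by omega)) (c i))
        (fun m hm => ih m (by omega) (fun j hj => hw j (by omega)) (c i))

/-- Every anchor of a cyclically-supported family of CW4's admits an immortal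
causal family of runs. -/
noncomputable def ysysImm {D : NCW A} {ι : Type} (anchor : ι → D.Q) (c : ι → ι)
    (Ψ : ∀ i, CW4 D (anchor i) (anchor (c i)) (anchor (c i))) (i : ι) :
    Imm D (anchor i) where
  xi := fun w => ysys anchor c Ψ w i
  causal := fun n w w' hw => ysys_causal anchor c Ψ w w' n hw i
  base := fun w => ysys_zero anchor c Ψ w i
  legal := fun w => ysys_Legal anchor c Ψ w i

/-! ### From a winning strategy in `G2From` to a `CW2` -/

abbrev G2Round (D : NCW A) :=
  GameRound (D.Q × D.Q × D.Q) A D.Q (D.Q × D.Q) Unit Unit Unit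

abbrev G2Strat (D : NCW A) :=
  EStrat (D.Q × D.Q × D.Q) A D.Q (D.Q × D.Q) Unit Unit Unit

section Extract

variable {D : NCW A}

noncomputable def exPlay (p q1 q2 : D.Q) (σ : G2Strat D) (w : Word A) (r1 r2 : ℕ → D.Q) :
    ℕ → List (G2Round D) × (D.Q × D.Q × D.Q)
  | 0 => ([], (p, q1, q2))
  | (n+1) =>
    let P := exPlay p q1 q2 σ w r1 r2 n
    let e := σ.f1 P.1 P.2 (w n)
    (P.1 ++ [{ st := P.2, a1 := w n, e1 := e, a2 := (r1 (n+1), r2 (n+1)),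
               e2 := (), a3 := (), e3 := () }],
     (e, r1 (n+1), r2 (n+1)))

noncomputable def exRound (p q1 q2 : D.Q) (σ : G2Strat D) (w : Word A) (r1 r2 : ℕ → D.Q)
    (n : ℕ) : G2Round D :=
  let P := exPlay p q1 q2 σ w r1 r2 n
  { st := P.2, a1 := w n, e1 := σ.f1 P.1 P.2 (w n), a2 := (r1 (n+1), r2 (n+1)),
    e2 := (), a3 := (), e3 := () }

variable (p q1 q2 : D.Q) (σ : G2Strat D) (w : Word A) (r1 r2 : ℕ → D.Q)

theorem exPlay_succ (n : ℕ) :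
    exPlay p q1 q2 σ w r1 r2 (n+1) =
      ((exPlay p q1 q2 σ w r1 r2 n).1 ++ [exRound p q1 q2 σ w r1 r2 n],
       ((exRound p q1 q2 σ w r1 r2 n).e1, r1 (n+1), r2 (n+1))) := rfl

theorem exHist : ∀ n, Game.hist (exRound p q1 q2 σ w r1 r2) n =
    (exPlay p q1 q2 σ w r1 r2 n).1 := by
  intro n
  induction n with
  | zero => simp [Game.hist, exPlay]
  | succ n ih =>
    show (List.range (n+1)).map _ = _
    rw [List.range_succ, List.map_append, List.map_singleton]
    rw [show (List.range n).map (exRound p q1 q2 σ w r1 r2) =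
      Game.hist (exRound p q1 q2 σ w r1 r2) n from rfl, ih, exPlay_succ]

theorem exStateOk : Game.StateOk (D.G2From p q1 q2) (exRound p q1 q2 σ w r1 r2) := by
  constructor
  · rfl
  · intro n; rfl

theorem exConsE : Game.ConsE σ (exRound p q1 q2 σ w r1 r2) := by
  intro n
  refine ⟨?_, Subsingleton.elim _ _, Subsingleton.elim _ _⟩
  show σ.f1 (exPlay p q1 q2 σ w r1 r2 n).1 _ _ = σ.f1 (Game.hist (exRound p q1 q2 σ w r1 r2) n) _ _
  rw [exHist]
  rfl

/-- The Eve-position run extracted from the play. -/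
noncomputable def exF : ℕ → D.Q := fun n => (exPlay p q1 q2 σ w r1 r2 n).2.1

theorem exSt (hb1 : r1 0 = q1) (hb2 : r2 0 = q2) :
    ∀ n, (exPlay p q1 q2 σ w r1 r2 n).2 = (exF p q1 q2 σ w r1 r2 n, r1 n, r2 n) := by
  intro n
  match n with
  | 0 => show (p, q1, q2) = (_, r1 0, r2 0); rw [hb1, hb2]; rfl
  | (n+1) => rfl

theorem exPlay_congr (w' : Word A) (r1' r2' : ℕ → D.Q) :
    ∀ n, (∀ m, m < n → w m = w' m) → (∀ m, m ≤ n → r1 m = r1' m) →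
      (∀ m, m ≤ n → r2 m = r2' m) →
      exPlay p q1 q2 σ w r1 r2 n = exPlay p q1 q2 σ w' r1' r2' n := by
  intro n
  induction n with
  | zero => intro _ _ _; rfl
  | succ n ih =>
    intro hw h1 h2
    have hP := ih (fun m hm => hw m (by omega)) (fun m hm => h1 m (by omega))
      (fun m hm => h2 m (by omega))
    show ((exPlay p q1 q2 σ w r1 r2 n).1 ++ [_], _) = ((exPlay p q1 q2 σ w' r1' r2' n).1 ++ [_], _)
    rw [show exPlay p q1 q2 σ w r1 r2 n = exPlay p q1 q2 σ w' r1' r2' n from hP,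
        hw n (by omega), h1 (n+1) (by omega), h2 (n+1) (by omega)]

theorem exHleg (hσ : Game.EveWinningStrat (D.G2From p q1 q2) σ)
    (hb1 : r1 0 = q1) (hb2 : r2 0 = q2) :
    ∀ n, PrefLegal D w r1 n → PrefLegal D w r2 n →
      Game.Hleg (D.G2From p q1 q2) (exRound p q1 q2 σ w r1 r2) n := by
  intro n
  induction n using Nat.strong_induction_on with
  | _ n ih =>
    intro hl1 hl2 m hm
    have hHm : Game.Hleg (D.G2From p q1 q2) (exRound p q1 q2 σ w r1 r2) m :=
      ih m hm (hl1.mono (by omega)) (hl2.mono (by omega))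
    have he1 := (hσ _ (exStateOk p q1 q2 σ w r1 r2) (exConsE p q1 q2 σ w r1 r2)).1 m hHm
      (Set.mem_univ _)
    refine ⟨Set.mem_univ _, he1, ?_, Set.mem_univ _, Set.mem_univ _, Set.mem_univ _⟩
    show (r1 (m+1), r2 (m+1)) ∈ {x : D.Q × D.Q |
      x.1 ∈ D.delta (exRound p q1 q2 σ w r1 r2 m).st.2.1 (w m) ∧
      x.2 ∈ D.delta (exRound p q1 q2 σ w r1 r2 m).st.2.2 (w m)}
    have hst : (exRound p q1 q2 σ w r1 r2 m).st = (exF p q1 q2 σ w r1 r2 m, r1 m, r2 m) :=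
      exSt p q1 q2 σ w r1 r2 hb1 hb2 m
    rw [hst]
    exact ⟨hl1 m hm, hl2 m hm⟩

/-- Extraction: a winning strategy in `G2From p q1 q2` yields a `CW2 D p q1 q2`. -/
noncomputable def cw2OfWinning (σ : G2Strat D) (hσ : Game.EveWinningStrat (D.G2From p q1 q2) σ) :
    CW2 D p q1 q2 where
  F w r1 r2 := exF p q1 q2 σ w r1 r2
  causal := by
    intro n w w' r1 r1' r2 r2' hw h1 h2
    show σ.f1 (exPlay p q1 q2 σ w r1 r2 n).1 (exPlay p q1 q2 σ w r1 r2 n).2 (w n) =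
      σ.f1 (exPlay p q1 q2 σ w' r1' r2' n).1 (exPlay p q1 q2 σ w' r1' r2' n).2 (w' n)
    rw [exPlay_congr p q1 q2 σ w r1 r2 w' r1' r2' n
      (fun m hm => hw m (by omega)) (fun m hm => h1 m (by omega)) (fun m hm => h2 m (by omega)),
      hw n (by omega)]
  base := fun w r1 r2 => rfl
  legal := by
    intro w r1 r2 n hb1 hb2 hl1 hl2
    have hH := exHleg p q1 q2 σ w r1 r2 hσ hb1 hb2 n hl1 hl2
    have he1 := (hσ _ (exStateOk p q1 q2 σ w r1 r2) (exConsE p q1 q2 σ w r1 r2)).1 n hH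
      (Set.mem_univ _)
    have hst : (exRound p q1 q2 σ w r1 r2 n).st = (exF p q1 q2 σ w r1 r2 n, r1 n, r2 n) :=
      exSt p q1 q2 σ w r1 r2 hb1 hb2 n
    have : (exRound p q1 q2 σ w r1 r2 n).e1 ∈
        D.delta (exRound p q1 q2 σ w r1 r2 n).st.1 (w n) := he1
    rw [hst] at this
    exact this
  wins := by
    intro w r1 r2 hb1 hb2 hl1 hl2
    have hAll : ∀ n, Game.RoundLegal (D.G2From p q1 q2) (exRound p q1 q2 σ w r1 r2) n := by
      intro n
      exact exHleg p q1 q2 σ w r1 r2 hσ hb1 hb2 (n+1) (hl1.prefLegal (n+1))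
        (hl2.prefLegal (n+1)) n (by omega)
    have hwin := (hσ _ (exStateOk p q1 q2 σ w r1 r2) (exConsE p q1 q2 σ w r1 r2)).2.2.2 hAll
    have hst : ∀ n, (exRound p q1 q2 σ w r1 r2 n).st =
        (exF p q1 q2 σ w r1 r2 n, r1 n, r2 n) := exSt p q1 q2 σ w r1 r2 hb1 hb2
    rcases hwin with ⟨N, hN⟩ | ⟨hn1, hn2⟩
    · left
      refine ⟨N, fun n hn => ?_⟩
      have := hN n hn
      rw [hst n] at this
      exact this
    · right
      constructor
      · rintro ⟨N, hN⟩
        exact hn1 ⟨N, fun n hn => by rw [hst n]; exact hN n hn⟩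
      · rintro ⟨N, hN⟩
        exact hn2 ⟨N, fun n hn => by rw [hst n]; exact hN n hn⟩

end Extract

/-! ### From a `CW2` to a winning strategy in `G2From` -/

section Realize

variable {D : NCW A}

/-- Decode the word played from a history (with the current letter appended). -/
def dWord (L : List (G2Round D)) (a : A) : Word A :=
  fun m => if h : m < L.length then (L[m]'h).a1 else a

def dR1 (L : List (G2Round D)) (st : D.Q × D.Q × D.Q) : ℕ → D.Q :=
  fun m => if h : m < L.length then (L[m]'h).st.2.1 else st.2.1

def dR2 (L : List (G2Round D)) (st : D.Q × D.Q × D.Q) : ℕ → D.Q :=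
  fun m => if h : m < L.length then (L[m]'h).st.2.2 else st.2.2

variable {p q1 q2 : D.Q} (Φ : CW2 D p q1 q2)

noncomputable def stratOf : G2Strat D where
  f1 L st a := Φ.F (dWord L a) (dR1 L st) (dR2 L st) (L.length + 1)
  f2 _ _ _ _ _ := ()
  f3 _ _ _ _ _ _ _ := ()

theorem hist_length {St α1 β1 α2 β2 α3 β3 : Type}
    (ρ : ℕ → GameRound St α1 β1 α2 β2 α3 β3) (n : ℕ) :
    (Game.hist ρ n).length = n := by simp [Game.hist]

theorem hist_get {St α1 β1 α2 β2 α3 β3 : Type}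
    (ρ : ℕ → GameRound St α1 β1 α2 β2 α3 β3) (n m : ℕ) (h : m < (Game.hist ρ n).length) :
    (Game.hist ρ n)[m]'h = ρ m := by
  simp [Game.hist]

theorem realize_key (ρ : ℕ → G2Round D)
    (hSO : Game.StateOk (D.G2From p q1 q2) ρ) (hCE : Game.ConsE (stratOf Φ) ρ) :
    ∀ n, (ρ n).st.1 =
      Φ.F (fun m => (ρ m).a1) (fun m => (ρ m).st.2.1) (fun m => (ρ m).st.2.2) n := by
  intro n
  match n with
  | 0 =>
    rw [Φ.base]
    rw [hSO.1]
    rfl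
  | (n+1) =>
    have hst := hSO.2 n
    have he1 := (hCE n).1
    have hZ : (ρ (n+1)).st.1 = (ρ n).e1 := by rw [hst]; rfl
    rw [hZ, he1]
    show Φ.F (dWord (Game.hist ρ n) (ρ n).a1) (dR1 (Game.hist ρ n) (ρ n).st)
      (dR2 (Game.hist ρ n) (ρ n).st) ((Game.hist ρ n).length + 1) = _
    rw [hist_length]
    refine Φ.causal n _ _ _ _ _ _ ?_ ?_ ?_
    · intro m hm
      by_cases hc : m < n
      · simp only [dWord, hist_length, hc, dif_pos, hist_get]
      · have : m = n := by omega
        subst this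
        simp [dWord, hist_length, hc]
    · intro m hm
      by_cases hc : m < n
      · simp only [dR1, hist_length, hc, dif_pos, hist_get]
      · have : m = n := by omega
        subst this
        simp [dR1, hist_length, hc]
    · intro m hm
      by_cases hc : m < n
      · simp only [dR2, hist_length, hc, dif_pos, hist_get]
      · have : m = n := by omega
        subst this
        simp [dR2, hist_length, hc]

theorem realize_winning : Game.EveWinningStrat (D.G2From p q1 q2) (stratOf Φ) := by
  intro ρ hSO hCE
  set W : Word A := fun m => (ρ m).a1 with hW
  set R1 : ℕ → D.Q := fun m => (ρ m).st.2.1 with hR1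
  set R2 : ℕ → D.Q := fun m => (ρ m).st.2.2 with hR2
  have hkey := realize_key Φ ρ hSO hCE
  have hb1 : R1 0 = q1 := by show (ρ 0).st.2.1 = q1; rw [hSO.1]; rfl
  have hb2 : R2 0 = q2 := by show (ρ 0).st.2.2 = q2; rw [hSO.1]; rfl
  have hstep1 : ∀ n, R1 (n+1) = (ρ n).a2.1 := by
    intro n; show (ρ (n+1)).st.2.1 = _; rw [hSO.2 n]; rfl
  have hstep2 : ∀ n, R2 (n+1) = (ρ n).a2.2 := by
    intro n; show (ρ (n+1)).st.2.2 = _; rw [hSO.2 n]; rfl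
  have hZstep : ∀ n, (ρ (n+1)).st.1 = (ρ n).e1 := by
    intro n; rw [hSO.2 n]; rfl
  have hprefs : ∀ n, Game.Hleg (D.G2From p q1 q2) ρ n →
      PrefLegal D W R1 n ∧ PrefLegal D W R2 n := by
    intro n hH
    constructor
    · intro m hm
      have := (hH m hm).2.2.1
      rw [hstep1 m]
      exact this.1
    · intro m hm
      have := (hH m hm).2.2.1
      rw [hstep2 m]
      exact this.2
  have he1mem : ∀ n, Game.Hleg (D.G2From p q1 q2) ρ n →
      (ρ n).e1 ∈ (D.G2From p q1 q2).E1 (ρ n).st (ρ n).a1 := by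
    intro n hH
    show (ρ n).e1 ∈ D.delta (ρ n).st.1 ((ρ n).a1)
    have := Φ.legal W R1 R2 n hb1 hb2 (hprefs n hH).1 (hprefs n hH).2
    rw [← hkey n, ← hkey (n+1)] at this
    rw [hZstep n] at this
    exact this
  refine ⟨fun n hH _ => he1mem n hH, fun _ _ _ _ _ => Set.mem_univ _,
    fun _ _ _ _ _ _ _ => Set.mem_univ _, ?_⟩
  intro hAll
  have hL1 : Legal D W R1 := by
    intro m
    have := (hAll m).2.2.1
    rw [hstep1 m]
    exact this.1
  have hL2 : Legal D W R2 := by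
    intro m
    have := (hAll m).2.2.1
    rw [hstep2 m]
    exact this.2
  rcases Φ.wins W R1 R2 hb1 hb2 hL1 hL2 with hacc | ⟨hn1, hn2⟩
  · left
    obtain ⟨N, hN⟩ := hacc
    refine ⟨N, fun n hn => ?_⟩
    have := hN n hn
    rw [← hkey n, ← hkey (n+1), hZstep n] at this
    exact this
  · right
    constructor
    · rintro ⟨N, hN⟩
      refine hn1 ⟨N, fun n hn => ?_⟩
      have := hN n hn
      rw [← hstep1 n] at this
      exact this
    · rintro ⟨N, hN⟩
      refine hn2 ⟨N, fun n hn => ?_⟩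
      have := hN n hn
      rw [← hstep2 n] at this
      exact this

end Realize

/-- Eve wins the two-token game from `(p,q1,q2)` iff there is a `CW2 D p q1 q2`. -/
theorem eveWins_iff_cw2 {D : NCW A} {p q1 q2 : D.Q} :
    Game.EveWins (D.G2From p q1 q2) ↔ Nonempty (CW2 D p q1 q2) := by
  constructor
  · rintro ⟨σ, hσ⟩
    exact ⟨cw2OfWinning p q1 q2 σ hσ⟩
  · rintro ⟨Φ⟩
    exact ⟨stratOf Φ, realize_winning Φ⟩

/-! ### Letter game conversions -/

abbrev LGRound (D : NCW A) := GameRound D.Q A D.Q Unit Unit Unit Unit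

abbrev LGStrat (D : NCW A) := EStrat D.Q A D.Q Unit Unit Unit Unit

section LetterGame

def dWordL {D : NCW A} (L : List (LGRound D)) (a : A) : Word A :=
  fun m => if h : m < L.length then (L[m]'h).a1 else a

variable {D : NCW A}

noncomputable def lgPlay (σ : LGStrat D) (w : Word A) : ℕ → List (LGRound D) × D.Q
  | 0 => ([], D.init)
  | (n+1) =>
    let P := lgPlay σ w n
    let e := σ.f1 P.1 P.2 (w n)
    (P.1 ++ [{ st := P.2, a1 := w n, e1 := e, a2 := (), e2 := (), a3 := (), e3 := () }], e)

noncomputable def lgRound (σ : LGStrat D) (w : Word A) (n : ℕ) : LGRound D :=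
  let P := lgPlay σ w n
  { st := P.2, a1 := w n, e1 := σ.f1 P.1 P.2 (w n), a2 := (), e2 := (), a3 := (), e3 := () }

variable (σ : LGStrat D) (w : Word A)

theorem lgHist : ∀ n, Game.hist (lgRound σ w) n = (lgPlay σ w n).1 := by
  intro n
  induction n with
  | zero => simp [Game.hist, lgPlay]
  | succ n ih =>
    show (List.range (n+1)).map _ = _
    rw [List.range_succ, List.map_append, List.map_singleton]
    rw [show (List.range n).map (lgRound σ w) = Game.hist (lgRound σ w) n from rfl, ih]
    rfl

theorem lgStateOk : Game.StateOk D.letterGame (lgRound σ w) := ⟨rfl, fun n => rfl⟩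

theorem lgConsE : Game.ConsE σ (lgRound σ w) := by
  intro n
  refine ⟨?_, Subsingleton.elim _ _, Subsingleton.elim _ _⟩
  show σ.f1 (lgPlay σ w n).1 _ _ = σ.f1 (Game.hist (lgRound σ w) n) _ _
  rw [lgHist]
  rfl

theorem lgHleg (hσ : Game.EveWinningStrat D.letterGame σ) :
    ∀ n, Game.Hleg D.letterGame (lgRound σ w) n := by
  intro n
  induction n using Nat.strong_induction_on with
  | _ n ih =>
    intro m hm
    have he1 := (hσ _ (lgStateOk σ w) (lgConsE σ w)).1 m (ih m hm) (Set.mem_univ _)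
    exact ⟨Set.mem_univ _, he1, Set.mem_univ _, Set.mem_univ _, Set.mem_univ _, Set.mem_univ _⟩

theorem lgPlay_congr (w' : Word A) :
    ∀ n, (∀ m, m < n → w m = w' m) → lgPlay σ w n = lgPlay σ w' n := by
  intro n
  induction n with
  | zero => intro _; rfl
  | succ n ih =>
    intro hw
    show ((lgPlay σ w n).1 ++ [_], _) = ((lgPlay σ w' n).1 ++ [_], _)
    rw [show lgPlay σ w n = lgPlay σ w' n from ih (fun m hm => hw m (by omega)),
      hw n (by omega)]

/-- Extraction for the letter game. -/
noncomputable def lgOfGFG (σ : LGStrat D) (hσ : Game.EveWinningStrat D.letterGame σ) :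
    LG D where
  H w := fun n => (lgPlay σ w n).2
  causal := by
    intro n w w' hw
    show σ.f1 (lgPlay σ w n).1 (lgPlay σ w n).2 (w n) =
      σ.f1 (lgPlay σ w' n).1 (lgPlay σ w' n).2 (w' n)
    rw [lgPlay_congr σ w w' n (fun m hm => hw m (by omega)), hw n (by omega)]
  base := fun w => rfl
  legal := by
    intro w n
    have he1 := (hσ _ (lgStateOk σ w) (lgConsE σ w)).1 n (lgHleg σ w hσ n) (Set.mem_univ _)
    exact he1
  wins := by
    intro w hw
    have hAll : ∀ n, Game.RoundLegal D.letterGame (lgRound σ w) n := by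
      intro n
      exact lgHleg σ w hσ (n+1) n (by omega)
    have hwin := (hσ _ (lgStateOk σ w) (lgConsE σ w)).2.2.2 hAll
    rcases hwin with hnl | ⟨N, hN⟩
    · exact absurd (show (fun n => (lgRound σ w n).a1) ∈ D.Lang from hw) hnl
    · exact ⟨N, fun n hn => hN n hn⟩

/-- Realization for the letter game. -/
noncomputable def lgStratOf (X : LG D) : LGStrat D where
  f1 L st a := X.H (dWordL L a) (L.length + 1)
  f2 _ _ _ _ _ := ()
  f3 _ _ _ _ _ _ _ := ()

theorem lg_realize_winning (X : LG D) :
    Game.EveWinningStrat D.letterGame (lgStratOf X) := by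
  intro ρ hSO hCE
  have hkey : ∀ n, (ρ n).st = X.H (fun m => (ρ m).a1) n := by
    intro n
    match n with
    | 0 => rw [X.base]; exact hSO.1
    | (n+1) =>
      have hst : (ρ (n+1)).st = (ρ n).e1 := hSO.2 n
      rw [hst, (hCE n).1]
      show X.H (dWordL (Game.hist ρ n) (ρ n).a1) ((Game.hist ρ n).length + 1) = _
      rw [hist_length]
      refine X.causal n _ _ ?_
      intro m hm
      by_cases hc : m < n
      · simp only [dWordL, hist_length, hc, dif_pos, hist_get]
      · have : m = n := by omega
        subst this
        simp [dWordL, hist_length, hc]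
  have he1 : ∀ n, (ρ n).e1 ∈ D.delta (ρ n).st ((ρ n).a1) := by
    intro n
    have hst : (ρ (n+1)).st = (ρ n).e1 := hSO.2 n
    have := X.legal (fun m => (ρ m).a1) n
    rw [← hkey n, ← hkey (n+1), hst] at this
    exact this
  refine ⟨fun n _ _ => he1 n, fun _ _ _ _ _ => Set.mem_univ _,
    fun _ _ _ _ _ _ _ => Set.mem_univ _, ?_⟩
  intro hAll
  by_cases hl : (fun n => (ρ n).a1) ∈ D.Lang
  · right
    obtain ⟨N, hN⟩ := X.wins _ hl
    refine ⟨N, fun n hn => ?_⟩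
    have := hN n hn
    rw [← hkey n, ← hkey (n+1), hSO.2 n] at this
    exact this
  · left
    exact hl

end LetterGame

/-! ### Membership machinery -/

section Main

variable {C : NCW A}

/-- The set of states from which Eve wins the two-token game. -/
def Wp (C : NCW A) (q : C.Q) : Prop := Game.EveWins (C.G2From q q q)

noncomputable def cw2Of {q : C.Q} (hq : Wp C q) : CW2 C q q q :=
  Classical.choice (eveWins_iff_cw2.mp hq)

theorem wOf {q : C.Q} (Φ : CW2 C q q q) : Wp C q := eveWins_iff_cw2.mpr ⟨Φ⟩

noncomputable def immOfW {q : C.Q} (hq : Wp C q) : Imm C q := (cw2Of hq).imm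

theorem wTotal {q : C.Q} (hq : Wp C q) (a : A) :
    ∃ q', q' ∈ C.delta q a ∧ Wp C q' := by
  set Φ := cw2Of hq
  set w : Word A := fun _ => a with hw
  refine ⟨Φ.sf w 1, ?_, ?_⟩
  · have := Φ.sf_legal w 0
    rw [Φ.sf_base w] at this
    exact this
  · exact wOf (Φ.sfResidual w 1)

/-- The composed four-token causal winner at a winning state. -/
noncomputable def g4Of {q : C.Q} (hq : Wp C q) : CW4 C q q q :=
  CW2.compose (cw2Of hq) (cw2Of hq) (cw2Of hq)

/-- Membership of the self-fed run in `W` when the carriers are in `W`. -/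
theorem wSf {q : C.Q} (G : CW4 C q q q) {w : Word A} {c1 c2 : ℕ → C.Q}
    (hb1 : c1 0 = q) (hb2 : c2 0 = q) (k : ℕ)
    (hc1 : PrefLegal C w c1 k) (hc2 : PrefLegal C w c2 k)
    (hW1 : Wp C (c1 k)) (hW2 : Wp C (c2 k)) :
    Wp C (G.sf w c1 c2 k) :=
  wOf ((G.sfResidual w hb1 hb2 k hc1 hc2).withImm (immOfW hW1) (immOfW hW2))

/-- Membership with carriers only legal up to the previous step (the value of
the self-fed run at time `k+1` does not depend on the carriers' steps at time
`k`, so we may substitute a legal winning continuation there). -/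
theorem wSfE {q : C.Q} (G : CW4 C q q q) {w : Word A} {c1 c2 : ℕ → C.Q}
    (hb1 : c1 0 = q) (hb2 : c2 0 = q) (k : ℕ)
    (hc1 : PrefLegal C w c1 k) (hc2 : PrefLegal C w c2 k)
    (hW1 : ∀ m, Wp C (c1 m)) (hW2 : ∀ m, Wp C (c2 m)) :
    Wp C (G.sf w c1 c2 (k+1)) := by
  obtain ⟨d1, hd1, hWd1⟩ := wTotal (hW1 k) (w k)
  obtain ⟨d2, hd2, hWd2⟩ := wTotal (hW2 k) (w k)
  set c1' : ℕ → C.Q := fun m => if m ≤ k then c1 m else d1 with hc1'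
  set c2' : ℕ → C.Q := fun m => if m ≤ k then c2 m else d2 with hc2'
  have hb1' : c1' 0 = q := by simp [hc1', hb1]
  have hb2' : c2' 0 = q := by simp [hc2', hb2]
  have hpl1 : PrefLegal C w c1' (k+1) := by
    intro m hm
    by_cases hmk : m < k
    · have e1 : c1' (m+1) = c1 (m+1) := by simp [hc1']; intro hh; omega
      have e2 : c1' m = c1 m := by simp [hc1']; intro hh; omega
      rw [e1, e2]
      exact hc1 m hmk
    · have hmk' : m = k := by omega
      subst hmk'
      have e1 : c1' (m+1) = d1 := by simp [hc1']
      have e2 : c1' m = c1 m := by simp [hc1']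
      rw [e1, e2]
      exact hd1
  have hpl2 : PrefLegal C w c2' (k+1) := by
    intro m hm
    by_cases hmk : m < k
    · have e1 : c2' (m+1) = c2 (m+1) := by simp [hc2']; intro hh; omega
      have e2 : c2' m = c2 m := by simp [hc2']; intro hh; omega
      rw [e1, e2]
      exact hc2 m hmk
    · have hmk' : m = k := by omega
      subst hmk'
      have e1 : c2' (m+1) = d2 := by simp [hc2']
      have e2 : c2' m = c2 m := by simp [hc2']
      rw [e1, e2]
      exact hd2
  have hW1' : Wp C (c1' (k+1)) := by
    have : c1' (k+1) = d1 := by simp [hc1']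
    rw [this]; exact hWd1
  have hW2' : Wp C (c2' (k+1)) := by
    have : c2' (k+1) = d2 := by simp [hc2']
    rw [this]; exact hWd2
  have hmem := wSf G hb1' hb2' (k+1) hpl1 hpl2 hW1' hW2'
  have heq : G.sf w c1 c2 (k+1) = G.sf w c1' c2' (k+1) := by
    refine G.sf_causal w w c1 c1' c2 c2' (k+1) (fun m _ => rfl) ?_ ?_
    · intro m hm; simp only [hc1']; rw [if_pos (show m ≤ k by omega)]
    · intro m hm; simp only [hc2']; rw [if_pos (show m ≤ k by omega)]
  rw [heq]
  exact hmem

/-- Combined: membership of the value at any index from prefix-legality up to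
the previous index. -/
theorem wSfE' {q : C.Q} (hq : Wp C q) (G : CW4 C q q q) {w : Word A} {c1 c2 : ℕ → C.Q}
    (hb1 : c1 0 = q) (hb2 : c2 0 = q) (k : ℕ)
    (hc1 : PrefLegal C w c1 (k-1)) (hc2 : PrefLegal C w c2 (k-1))
    (hW1 : ∀ m, Wp C (c1 m)) (hW2 : ∀ m, Wp C (c2 m)) :
    Wp C (G.sf w c1 c2 k) := by
  match k with
  | 0 =>
    rw [G.sf_base]
    exact hq
  | (k+1) =>
    exact wSfE G hb1 hb2 k hc1 hc2 hW1 hW2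

end Main

/-! ### Part (i): the restriction satisfies G2 everywhere -/

section Restrict

variable {C : NCW A} (h : Game.EveWins (C.G2From C.init C.init C.init))

theorem prefLegal_restrict {w : Word A} {s : ℕ → (C.restrict h).Q} {n : ℕ}
    (hp : PrefLegal (C.restrict h) w s n) :
    PrefLegal C w (fun m => (s m).val) n := fun m hm => hp m hm

theorem legal_restrict {w : Word A} {s : ℕ → (C.restrict h).Q}
    (hp : Legal (C.restrict h) w s) :
    Legal C w (fun m => (s m).val) := fun m => hp m

theorem acc_restrict {w : Word A} {s : ℕ → (C.restrict h).Q} :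
    Acc (C.restrict h) w s ↔ Acc C w (fun m => (s m).val) := Iff.rfl

variable (q' : (C.restrict h).Q)

/-- Condition under which we can certify membership of the self-fed run. -/
def resCond (w : Word A) (s1 s2 : ℕ → (C.restrict h).Q) (k : ℕ) : Prop :=
  s1 0 = q' ∧ s2 0 = q' ∧
    PrefLegal C w (fun m => (s1 m).val) (k-1) ∧
    PrefLegal C w (fun m => (s2 m).val) (k-1)

noncomputable def resVal (w : Word A) (s1 s2 : ℕ → (C.restrict h).Q) : ℕ → C.Q :=
  (g4Of q'.2).sf w (fun m => (s1 m).val) (fun m => (s2 m).val)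

theorem resMem (w : Word A) (s1 s2 : ℕ → (C.restrict h).Q) (k : ℕ)
    (hc : resCond h q' w s1 s2 k) : Wp C (resVal h q' w s1 s2 k) :=
  wSfE' q'.2 (g4Of q'.2) (by rw [hc.1]) (by rw [hc.2.1]) k hc.2.2.1 hc.2.2.2
    (fun m => (s1 m).2) (fun m => (s2 m).2)

attribute [local instance] Classical.propDecidable

noncomputable def resF (w : Word A) (s1 s2 : ℕ → (C.restrict h).Q) (k : ℕ) :
    (C.restrict h).Q :=
  if hc : resCond h q' w s1 s2 k then ⟨resVal h q' w s1 s2 k, resMem h q' w s1 s2 k hc⟩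
  else q'

theorem resF_pos {w : Word A} {s1 s2 : ℕ → (C.restrict h).Q} {k : ℕ}
    (hc : resCond h q' w s1 s2 k) :
    (resF h q' w s1 s2 k).val = resVal h q' w s1 s2 k := by
  rw [resF]; exact congrArg Subtype.val (dif_pos hc)

theorem resCond_mono {w : Word A} {s1 s2 : ℕ → (C.restrict h).Q} {j k : ℕ} (hjk : j ≤ k)
    (hc : resCond h q' w s1 s2 k) : resCond h q' w s1 s2 j :=
  ⟨hc.1, hc.2.1, hc.2.2.1.mono (by omega), hc.2.2.2.mono (by omega)⟩

noncomputable def restrictCW2 : CW2 (C.restrict h) q' q' q' where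
  F w s1 s2 := resF h q' w s1 s2
  causal := by
    intro n w w' s1 s1' s2 s2' hw h1 h2
    have hval1 : ∀ m, m ≤ n → (s1 m).val = (s1' m).val := fun m hm => by rw [h1 m hm]
    have hval2 : ∀ m, m ≤ n → (s2 m).val = (s2' m).val := fun m hm => by rw [h2 m hm]
    have hcond : resCond h q' w s1 s2 (n+1) ↔ resCond h q' w' s1' s2' (n+1) := by
      unfold resCond
      have e : n + 1 - 1 = n := by omega
      rw [e]
      constructor
      · rintro ⟨a1, a2, a3, a4⟩
        refine ⟨by rw [← h1 0 (by omega)]; exact a1, by rw [← h2 0 (by omega)]; exact a2, ?_, ?_⟩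
        · intro m hm
          show (s1' (m+1)).val ∈ C.delta (s1' m).val (w' m)
          rw [← hval1 (m+1) (by omega), ← hval1 m (by omega), ← hw m (by omega)]
          exact a3 m hm
        · intro m hm
          show (s2' (m+1)).val ∈ C.delta (s2' m).val (w' m)
          rw [← hval2 (m+1) (by omega), ← hval2 m (by omega), ← hw m (by omega)]
          exact a4 m hm
      · rintro ⟨a1, a2, a3, a4⟩
        refine ⟨by rw [h1 0 (by omega)]; exact a1, by rw [h2 0 (by omega)]; exact a2, ?_, ?_⟩
        · intro m hm
          show (s1 (m+1)).val ∈ C.delta (s1 m).val (w m)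
          rw [hval1 (m+1) (by omega), hval1 m (by omega), hw m (by omega)]
          exact a3 m hm
        · intro m hm
          show (s2 (m+1)).val ∈ C.delta (s2 m).val (w m)
          rw [hval2 (m+1) (by omega), hval2 m (by omega), hw m (by omega)]
          exact a4 m hm
    by_cases hcl : resCond h q' w s1 s2 (n+1)
    · simp only [resF]
      refine ((dif_pos hcl).trans ?_).trans (dif_pos (hcond.1 hcl)).symm
      apply Subtype.ext
      show resVal h q' w s1 s2 (n+1) = resVal h q' w' s1' s2' (n+1)
      exact (g4Of q'.2).sf_causal w w' _ _ _ _ (n+1) (fun m hm => hw m (by omega))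
        (fun m hm => hval1 m (by omega)) (fun m hm => hval2 m (by omega))
    · simp only [resF]
      refine (dif_neg hcl).trans (Eq.symm ?_)
      exact dif_neg (fun hcr => hcl (hcond.2 hcr))
  base := by
    intro w s1 s2
    simp only [resF]
    by_cases hc : resCond h q' w s1 s2 0
    · refine (dif_pos hc).trans ?_
      apply Subtype.ext
      show resVal h q' w s1 s2 0 = q'.val
      exact (g4Of q'.2).sf_base w _ _
    · exact dif_neg hc
  legal := by
    intro w s1 s2 n hb1 hb2 hl1 hl2
    have hpl1 := prefLegal_restrict h hl1
    have hpl2 := prefLegal_restrict h hl2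
    have hcn1 : resCond h q' w s1 s2 (n+1) :=
      ⟨hb1, hb2, by rw [show n+1-1 = n by omega]; exact hpl1,
        by rw [show n+1-1 = n by omega]; exact hpl2⟩
    have hcn : resCond h q' w s1 s2 n := resCond_mono h q' (by omega) hcn1
    show (resF h q' w s1 s2 (n+1)).val ∈ C.delta (resF h q' w s1 s2 n).val (w n)
    rw [resF_pos h q' hcn1, resF_pos h q' hcn]
    exact (g4Of q'.2).sf_legal (by rw [hb1]) (by rw [hb2]) n hpl1 hpl2
  wins := by
    intro w s1 s2 hb1 hb2 hl1 hl2
    have hL1 := legal_restrict h hl1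
    have hL2 := legal_restrict h hl2
    have hcall : ∀ k, resCond h q' w s1 s2 k := by
      intro k
      exact ⟨hb1, hb2, hL1.prefLegal _, hL2.prefLegal _⟩
    have hvals : ∀ k, (resF h q' w s1 s2 k).val = resVal h q' w s1 s2 k :=
      fun k => resF_pos h q' (hcall k)
    rcases (g4Of q'.2).sf_wins (by rw [hb1]) (by rw [hb2]) hL1 hL2 with hacc | ⟨hn1, hn2⟩
    · left
      obtain ⟨N, hN⟩ := hacc
      refine ⟨N, fun n hn => ?_⟩
      show C.acc (resF h q' w s1 s2 n).val (w n) (resF h q' w s1 s2 (n+1)).val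
      rw [hvals n, hvals (n+1)]
      exact hN n hn
    · right
      constructor
      · rw [acc_restrict h]
        exact hn1
      · rw [acc_restrict h]
        exact hn2

/-- Part (i). -/
theorem part_one : Game.EveWins ((C.restrict h).G2From q' q' q') :=
  eveWins_iff_cw2.mpr ⟨restrictCW2 h q'⟩

end Restrict

/-! ### Language inclusion into the restriction -/

section Linc

variable {C : NCW A} (h : Game.EveWins (C.G2From C.init C.init C.init))

/-- The iterated carrier runs: `rseq 0` is a given accepting run, and
`rseq (k+1)` is the self-fed response to two copies of `rseq k`. -/
noncomputable def rseq (r : ℕ → C.Q) (w : Word A) : ℕ → ℕ → C.Q :=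
  fun k => Nat.rec r (fun _ prev => (g4Of (h : Wp C C.init)).sf w prev prev) k

variable (r : ℕ → C.Q) (w : Word A)

theorem rseq_succ (k : ℕ) :
    rseq h r w (k+1) = (g4Of (h : Wp C C.init)).sf w (rseq h r w k) (rseq h r w k) := rfl

theorem rseq_base (hr0 : r 0 = C.init) : ∀ k, rseq h r w k 0 = C.init := by
  intro k
  match k with
  | 0 => exact hr0
  | (k+1) => exact CW4.sf_base _ _ _ _

theorem rseq_legal (hr0 : r 0 = C.init) (hrL : Legal C w r) :
    ∀ k, Legal C w (rseq h r w k) := by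
  intro k
  induction k with
  | zero => exact hrL
  | succ k ih =>
    exact CW4.sf_Legal _ (rseq_base h r w hr0 k) (rseq_base h r w hr0 k) ih ih

theorem rseq_acc (hr0 : r 0 = C.init) (hrL : Legal C w r) (hra : Acc C w r) :
    ∀ k, Acc C w (rseq h r w k) := by
  intro k
  induction k with
  | zero => exact hra
  | succ k ih =>
    rcases CW4.sf_wins _ (rseq_base h r w hr0 k) (rseq_base h r w hr0 k)
      (rseq_legal h r w hr0 hrL k) (rseq_legal h r w hr0 hrL k) with hacc | ⟨hn, _⟩
    · exact hacc
    · exact absurd ih hn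

/-- The residual CW4 of the `(k+1)`-st carrier at time `n`. -/
noncomputable def rseqRes (hr0 : r 0 = C.init) (hrL : Legal C w r) (k n : ℕ) :
    CW4 C (rseq h r w (k+1) n) (rseq h r w k n) (rseq h r w k n) :=
  (g4Of (h : Wp C C.init)).sfResidual w (rseq_base h r w hr0 k) (rseq_base h r w hr0 k) n
    ((rseq_legal h r w hr0 hrL k).prefLegal n) ((rseq_legal h r w hr0 hrL k).prefLegal n)

/-- Transport of a CW4 along equalities of the carrier anchors. -/
def CW4.castY {D : NCW A} {p y y' : D.Q} (e : y = y') (G : CW4 D p y y) : CW4 D p y' y' :=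
  e ▸ G

/-- The walk going cyclically down from `l2` to `l1+1`. -/
def walk (l1 l2 : ℕ) : ℕ → ℕ
  | 0 => l2
  | (i+1) => if walk l1 l2 i = l1 + 1 then l2 else walk l1 l2 i - 1

theorem walk_bounds (l1 l2 : ℕ) (hl : l1 < l2) : ∀ i, l1 + 1 ≤ walk l1 l2 i ∧ walk l1 l2 i ≤ l2 := by
  intro i
  induction i with
  | zero => simp [walk]; omega
  | succ i ih =>
    rw [walk]
    by_cases hc : walk l1 l2 i = l1 + 1
    · simp [hc]; omega
    · simp [hc]; omega

/-- Everything on the cycle admits an immortal family. -/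
theorem cycle_imm (hr0 : r 0 = C.init) (hrL : Legal C w r)
    {n l1 l2 : ℕ} (hl : l1 < l2) (hg : rseq h r w l1 n = rseq h r w l2 n) :
    ∀ j, l1 + 1 ≤ j → j ≤ l2 → Nonempty (Imm C (rseq h r w j n)) := by
  -- the anchor family indexed by ℕ via the walk
  set anchor : ℕ → C.Q := fun i => rseq h r w (walk l1 l2 i) n with hanch
  have hΨ : ∀ i, CW4 C (anchor i) (anchor (i+1)) (anchor (i+1)) := by
    intro i
    have hb := walk_bounds l1 l2 hl i
    by_cases hc : walk l1 l2 i = l1 + 1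
    · have hnext : walk l1 l2 (i+1) = l2 := by rw [walk, if_pos hc]
      have hΨ0 : CW4 C (rseq h r w (l1+1) n) (rseq h r w l1 n) (rseq h r w l1 n) :=
        rseqRes h r w hr0 hrL l1 n
      have : CW4 C (rseq h r w (l1+1) n) (rseq h r w l2 n) (rseq h r w l2 n) :=
        CW4.castY hg hΨ0
      simp only [hanch, hc, hnext]
      exact this
    · have hnext : walk l1 l2 (i+1) = walk l1 l2 i - 1 := by rw [walk, if_neg hc]
      have hΨ0 : CW4 C (rseq h r w ((walk l1 l2 i - 1) + 1) n)
          (rseq h r w (walk l1 l2 i - 1) n) (rseq h r w (walk l1 l2 i - 1) n) :=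
        rseqRes h r w hr0 hrL (walk l1 l2 i - 1) n
      have he : walk l1 l2 i - 1 + 1 = walk l1 l2 i := by omega
      rw [he] at hΨ0
      simp only [hanch, hnext]
      exact hΨ0
  -- walk visits every value in [l1+1, l2]
  have hwalkval : ∀ i, i ≤ l2 - (l1 + 1) → walk l1 l2 i = l2 - i := by
    intro i
    induction i with
    | zero => intro _; simp [walk]
    | succ i ih =>
      intro hi
      have hiv := ih (by omega)
      rw [walk, hiv, if_neg (by omega)]
      omega
  have hvisit : ∀ j, l1 + 1 ≤ j → j ≤ l2 → ∃ i, walk l1 l2 i = j := by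
    intro j hj1 hj2
    refine ⟨l2 - j, ?_⟩
    rw [hwalkval (l2 - j) (by omega)]
    omega
  intro j hj1 hj2
  obtain ⟨i, hi⟩ := hvisit j hj1 hj2
  refine ⟨?_⟩
  have := ysysImm anchor Nat.succ hΨ i
  rw [hanch] at this
  simp only at this
  rw [hi] at this
  exact this

theorem wp_rseq [Finite C.Q] (hr0 : r 0 = C.init) (hrL : Legal C w r) :
    ∀ n, Wp C (rseq h r w (Nat.card C.Q + 1) n) := by
  intro n
  haveI : Fintype C.Q := Fintype.ofFinite _
  obtain ⟨a, b, hne, heq⟩ := Fintype.exists_ne_map_eq_of_card_lt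
    (fun l : Fin (Nat.card C.Q + 2) => rseq h r w l.val n)
    (by rw [Fintype.card_fin, Nat.card_eq_fintype_card]; omega)
  -- order the pigeonhole pair
  obtain ⟨l1, l2, hl, hg⟩ : ∃ l1 l2 : ℕ, l1 < l2 ∧ l2 ≤ Nat.card C.Q + 1 ∧
      rseq h r w l1 n = rseq h r w l2 n := by
    rcases lt_or_gt_of_ne (Fin.val_ne_of_ne hne) with hlt | hgt
    · exact ⟨a.val, b.val, hlt, by omega, heq⟩
    · exact ⟨b.val, a.val, hgt, by omega, heq.symm⟩
  obtain ⟨hl2K, hg⟩ := hg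
  -- immortal families on the cycle
  have hImm : ∀ j, l1 + 1 ≤ j → j ≤ l2 → Nonempty (Imm C (rseq h r w j n)) :=
    fun j h1 h2 => cycle_imm h r w hr0 hrL hl hg j h1 h2
  -- W-membership at the top of the cycle
  have hWl2 : Wp C (rseq h r w l2 n) := by
    have hI : Nonempty (Imm C (rseq h r w (l2 - 1) n)) := by
      by_cases hc : l2 - 1 = l1
      · obtain ⟨I⟩ := hImm l2 (by omega) (by omega)
        rw [hc, hg]
        exact ⟨I⟩
      · exact hImm (l2 - 1) (by omega) (by omega)
    obtain ⟨I⟩ := hI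
    have hΨ : CW4 C (rseq h r w ((l2 - 1) + 1) n) (rseq h r w (l2 - 1) n)
        (rseq h r w (l2 - 1) n) := rseqRes h r w hr0 hrL (l2 - 1) n
    rw [show l2 - 1 + 1 = l2 by omega] at hΨ
    exact wOf (hΨ.withImm I I)
  -- upward propagation
  have hprop : ∀ j, Wp C (rseq h r w (l2 + j) n) := by
    intro j
    induction j with
    | zero => exact hWl2
    | succ j ih =>
      have I := immOfW ih
      have hΨ : CW4 C (rseq h r w ((l2 + j) + 1) n) (rseq h r w (l2 + j) n)
          (rseq h r w (l2 + j) n) := rseqRes h r w hr0 hrL (l2 + j) n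
      have := wOf (hΨ.withImm I I)
      rw [show l2 + j + 1 = l2 + (j+1) by omega] at this
      exact this
  have := hprop (Nat.card C.Q + 1 - l2)
  rw [show l2 + (Nat.card C.Q + 1 - l2) = Nat.card C.Q + 1 by omega] at this
  exact this

/-- Language inclusion: every word accepted by `C` is accepted within the
restriction. -/
theorem lang_incl [Finite C.Q] : C.Lang ⊆ (C.restrict h).Lang := by
  intro w hw
  obtain ⟨r, ⟨hr0, hrstep⟩, hracc⟩ := hw
  have hrL : Legal C w r := hrstep
  have hW : ∀ n, Wp C (rseq h r w (Nat.card C.Q + 1) n) := wp_rseq h r w hr0 hrL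
  refine ⟨fun n => ⟨rseq h r w (Nat.card C.Q + 1) n, hW n⟩, ⟨?_, ?_⟩, ?_⟩
  · apply Subtype.ext
    exact rseq_base h r w hr0 (Nat.card C.Q + 1)
  · intro n
    exact rseq_legal h r w hr0 hrL (Nat.card C.Q + 1) n
  · exact rseq_acc h r w hr0 hrL hracc (Nat.card C.Q + 1)

end Linc

/-! ### Part (ii) -/

theorem part_two {C : NCW A} [Finite C.Q] (h : Game.EveWins (C.G2From C.init C.init C.init))
    (hg : (C.restrict h).GFG) : C.GFG := by
  obtain ⟨σ, hσ⟩ := hg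
  have X : LG (C.restrict h) := lgOfGFG σ hσ
  have Y : LG C := {
    H := fun w n => (X.H w n).val
    causal := fun n w w' hw => by
      show (X.H w (n+1)).val = (X.H w' (n+1)).val
      rw [X.causal n w w' hw]
    base := fun w => by
      show (X.H w 0).val = C.init
      rw [X.base]
      rfl
    legal := fun w n => X.legal w n
    wins := fun w hw => X.wins w (lang_incl h hw) }
  exact ⟨lgStratOf Y, lg_realize_winning Y⟩


end Stmt19
theorem G2_restriction_preserves
    (Alph : Type) (C : NCW Alph) [Finite Alph] [Finite C.Q]
    (h : Game.EveWins (C.G2From C.init C.init C.init)) :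
    (∀ q' : (C.restrict h).Q,
        Game.EveWins ((C.restrict h).G2From q' q' q')) ∧
    ((C.restrict h).GFG → C.GFG) := by
  constructor
  · intro q'
    exact Stmt19.part_one h q'
  · intro hg
    exact Stmt19.part_two h hg
end
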